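/- arXiv:1708.02397 — 3 statements merged into one kernel-verified Lean document; each statement's English description precedes it below -/
import Mathlib

section
/- For the complete bipartite graph K_{m,n} with m, n ≥ 1, the harmonic index of its total graph satisfies H(T(K_{m,n})) = mn/2 + 8mn(m + n)/((3m + n)(m + 3n)). -/
open scoped Classical

/-- The total graph `T(G)` of a simple graph `G`: its vertex set is `V(G) ∪ E(G)`,
and two vertices of `T(G)` are adjacent iff the corresponding elements of `G`
are adjacent vertices, adjacent (distinct, sharing an endpoint) edges, or an
incident vertex–edge pair. -/
def SimpleGraph.totalGraph {V : Type*} (G : SimpleGraph V) :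
    SimpleGraph (V ⊕ G.edgeSet) where
  Adj x y :=
    match x, y with
    | Sum.inl u, Sum.inl v => G.Adj u v
    | Sum.inl u, Sum.inr e => u ∈ (e : Sym2 V)
    | Sum.inr e, Sum.inl u => u ∈ (e : Sym2 V)
    | Sum.inr e, Sum.inr f => e ≠ f ∧ ∃ v, v ∈ (e : Sym2 V) ∧ v ∈ (f : Sym2 V)
  symm := ⟨by
    rintro (u | e) (v | f) h
    · exact h.symm
    · exact h
    · exact h
    · exact ⟨h.1.symm, h.2.imp fun v hv => ⟨hv.2, hv.1⟩⟩⟩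
  loopless := ⟨by
    rintro (u | e) h
    · exact G.irrefl h
    · exact h.1 rfl⟩

/-- The harmonic index `H(G) = ∑_{uv ∈ E(G)} 2 / (deg u + deg v)`. -/
noncomputable def SimpleGraph.harmonicIndex {V : Type*} [Fintype V] (G : SimpleGraph V) : ℝ :=
  ∑ e ∈ G.edgeFinset,
    Sym2.lift ⟨fun u v => 2 / ((G.degree u : ℝ) + (G.degree v : ℝ)),
      fun u v => by simp [add_comm]⟩ e

private def bijFun (m n : ℕ) (p : Fin m × Fin n) :
    (completeBipartiteGraph (Fin m) (Fin n)).edgeSet :=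
  ⟨s(Sum.inl p.1, Sum.inr p.2), by simp [completeBipartiteGraph]⟩

private lemma bijFun_bijective (m n : ℕ) : Function.Bijective (bijFun m n) := by
  constructor
  · rintro ⟨i, j⟩ ⟨i', j'⟩ h
    simp only [bijFun, Subtype.mk.injEq] at h
    rcases Sym2.eq_iff.mp (congrArg Subtype.val h) with ⟨h1, h2⟩ | ⟨h1, h2⟩ <;> simp_all
  · rintro ⟨e, he⟩
    induction e with
    | _ a b =>
      rw [SimpleGraph.mem_edgeSet] at he
      rcases a with i | j <;> rcases b with i' | j'
      · simp [completeBipartiteGraph] at he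
      · exact ⟨(i, j'), rfl⟩
      · exact ⟨(i', j), Subtype.ext Sym2.eq_swap⟩
      · simp [completeBipartiteGraph] at he

private noncomputable def eqv (m n : ℕ) :
    Fin m × Fin n ≃ (completeBipartiteGraph (Fin m) (Fin n)).edgeSet :=
  Equiv.ofBijective _ (bijFun_bijective m n)

private lemma eqv_coe (m n : ℕ) (p : Fin m × Fin n) :
    ((eqv m n p : (completeBipartiteGraph (Fin m) (Fin n)).edgeSet) : Sym2 (Fin m ⊕ Fin n))
      = s(Sum.inl p.1, Sum.inr p.2) := rfl

private lemma tg_adj_ll {V : Type*} (G : SimpleGraph V) (u v : V) :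
    G.totalGraph.Adj (Sum.inl u) (Sum.inl v) ↔ G.Adj u v := Iff.rfl

private lemma tg_adj_lr {V : Type*} (G : SimpleGraph V) (u : V) (e : G.edgeSet) :
    G.totalGraph.Adj (Sum.inl u) (Sum.inr e) ↔ u ∈ (e : Sym2 V) := Iff.rfl

private lemma tg_adj_rl {V : Type*} (G : SimpleGraph V) (u : V) (e : G.edgeSet) :
    G.totalGraph.Adj (Sum.inr e) (Sum.inl u) ↔ u ∈ (e : Sym2 V) := Iff.rfl

private lemma tg_adj_rr {V : Type*} (G : SimpleGraph V) (e f : G.edgeSet) :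
    G.totalGraph.Adj (Sum.inr e) (Sum.inr f) ↔
      e ≠ f ∧ ∃ v, v ∈ (e : Sym2 V) ∧ v ∈ (f : Sym2 V) := Iff.rfl

private lemma cbg_adj_ll (m n : ℕ) (i i' : Fin m) :
    ¬ (completeBipartiteGraph (Fin m) (Fin n)).Adj (Sum.inl i) (Sum.inl i') := by
  simp [completeBipartiteGraph]

private lemma cbg_adj_rr (m n : ℕ) (j j' : Fin n) :
    ¬ (completeBipartiteGraph (Fin m) (Fin n)).Adj (Sum.inr j) (Sum.inr j') := by
  simp [completeBipartiteGraph]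

private lemma cbg_adj_lr (m n : ℕ) (i : Fin m) (j : Fin n) :
    (completeBipartiteGraph (Fin m) (Fin n)).Adj (Sum.inl i) (Sum.inr j) := by
  simp [completeBipartiteGraph]

private lemma cbg_adj_rl (m n : ℕ) (i : Fin m) (j : Fin n) :
    (completeBipartiteGraph (Fin m) (Fin n)).Adj (Sum.inr j) (Sum.inl i) := by
  simp [completeBipartiteGraph]

private lemma eqv_inj (m n : ℕ) {p q : Fin m × Fin n} : eqv m n p = eqv m n q ↔ p = q :=
  (eqv m n).apply_eq_iff_eq

private lemma degree_eq_sum {V : Type*} [Fintype V] (G : SimpleGraph V) (v : V) :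
    G.degree v = ∑ y, if G.Adj v y then 1 else 0 := by
  classical
  rw [← SimpleGraph.card_neighborFinset_eq_degree, SimpleGraph.neighborFinset_eq_filter,
    Finset.card_filter]

private lemma degL (m n : ℕ) (i : Fin m) :
    (completeBipartiteGraph (Fin m) (Fin n)).totalGraph.degree (Sum.inl (Sum.inl i)) = 2 * n := by
  classical
  rw [degree_eq_sum, Fintype.sum_sum_type]
  rw [← Equiv.sum_comp (eqv m n) (fun e => if (completeBipartiteGraph (Fin m) (Fin n)).totalGraph.Adj (Sum.inl (Sum.inl i)) (Sum.inr e) then 1 else 0)]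
  simp only [tg_adj_ll, tg_adj_lr, eqv_coe, Sym2.mem_iff, Fintype.sum_sum_type,
    Fintype.sum_prod_type]
  simp [cbg_adj_ll, cbg_adj_lr, Finset.sum_ite_eq, Finset.sum_ite_eq', two_mul]

private lemma degR (m n : ℕ) (j : Fin n) :
    (completeBipartiteGraph (Fin m) (Fin n)).totalGraph.degree (Sum.inl (Sum.inr j)) = 2 * m := by
  classical
  rw [degree_eq_sum, Fintype.sum_sum_type]
  rw [← Equiv.sum_comp (eqv m n) (fun e => if (completeBipartiteGraph (Fin m) (Fin n)).totalGraph.Adj (Sum.inl (Sum.inr j)) (Sum.inr e) then 1 else 0)]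
  simp only [tg_adj_ll, tg_adj_lr, eqv_coe, Sym2.mem_iff, Fintype.sum_sum_type,
    Fintype.sum_prod_type]
  simp [cbg_adj_rr, cbg_adj_rl, Finset.sum_ite_eq, Finset.sum_ite_eq', two_mul]

private lemma sum_ite_ne {k : ℕ} (b : Fin k) :
    (∑ x : Fin k, if b = x then 0 else 1) = k - 1 := by
  have h2 : (∑ x : Fin k, if b = x then (1:ℕ) else 0) = 1 := by
    simp [Finset.sum_ite_eq]
  have h3 : (∑ x : Fin k, if b = x then (0:ℕ) else 1)
      + (∑ x : Fin k, if b = x then (1:ℕ) else 0) = k := by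
    rw [← Finset.sum_add_distrib]
    have : ∀ x : Fin k, (if b = x then (0:ℕ) else 1) + (if b = x then (1:ℕ) else 0) = 1 := by
      intro x; by_cases h : b = x <;> simp [h]
    simp [this]
  omega

private lemma degE (m n : ℕ) (hm : 1 ≤ m) (hn : 1 ≤ n)
    (e : (completeBipartiteGraph (Fin m) (Fin n)).edgeSet) :
    (completeBipartiteGraph (Fin m) (Fin n)).totalGraph.degree (Sum.inr e) = m + n := by
  classical
  obtain ⟨p, rfl⟩ := (eqv m n).surjective e
  obtain ⟨a, b⟩ := p
  rw [degree_eq_sum, Fintype.sum_sum_type]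
  rw [← Equiv.sum_comp (eqv m n) (fun f => if (completeBipartiteGraph (Fin m) (Fin n)).totalGraph.Adj (Sum.inr (eqv m n (a, b))) (Sum.inr f) then 1 else 0)]
  simp only [tg_adj_rl, tg_adj_rr, Ne, eqv_inj, eqv_coe, Sym2.mem_iff, Fintype.sum_sum_type,
    Fintype.sum_prod_type]
  have hcond : ∀ (x : Fin m) (y : Fin n),
      (¬(a, b) = (x, y) ∧
        ∃ v, (v = Sum.inl a ∨ v = Sum.inr b) ∧ (v = Sum.inl x ∨ v = Sum.inr y))
        ↔ ((a = x ∧ ¬ b = y) ∨ (¬ a = x ∧ b = y)) := by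
    intro x y
    constructor
    · rintro ⟨hne, v, (rfl | rfl), (h | h)⟩ <;>
        simp_all [Prod.mk.injEq]
    · rintro (⟨rfl, h⟩ | ⟨h, rfl⟩)
      · exact ⟨by simp [Prod.mk.injEq, h], Sum.inl a, Or.inl rfl, Or.inl rfl⟩
      · exact ⟨by simp [Prod.mk.injEq, h], Sum.inr b, Or.inr rfl, Or.inr rfl⟩
  simp only [hcond]
  have h1 : ∀ (x : Fin m) (y : Fin n),
      (if (a = x ∧ ¬ b = y) ∨ (¬ a = x ∧ b = y) then (1:ℕ) else 0)
        = (if a = x then if b = y then 0 else 1 else 0)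
          + (if b = y then if a = x then 0 else 1 else 0) := by
    intro x y; by_cases h1 : a = x <;> by_cases h2 : b = y <;> simp [h1, h2]
  simp only [h1, Finset.sum_add_distrib]
  have h2 : ∀ a' : Fin m, ((Sum.inl a' : Fin m ⊕ Fin n) = Sum.inl a ∨ (Sum.inl a' : Fin m ⊕ Fin n) = Sum.inr b) ↔ a' = a := by simp
  have h3 : ∀ b' : Fin n, ((Sum.inr b' : Fin m ⊕ Fin n) = Sum.inl a ∨ (Sum.inr b' : Fin m ⊕ Fin n) = Sum.inr b) ↔ b' = b := by simp
  simp only [h2, h3]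
  simp [Finset.sum_ite_eq, Finset.sum_ite_eq', apply_ite, sum_ite_ne]
  omega

private lemma sum_edges_eq {V : Type*} [Fintype V] (G : SimpleGraph V)
    (f : V → V → ℝ) (hf : ∀ a b, f a b = f b a) :
    ∑ e ∈ G.edgeFinset, Sym2.lift ⟨f, hf⟩ e
      = (1/2) * ∑ x, ∑ y, if G.Adj x y then f x y else 0 := by
  classical
  have maps : ∀ p ∈ Finset.univ.filter (fun p : V × V => G.Adj p.1 p.2),
      Sym2.mk p.1 p.2 ∈ G.edgeFinset := by
    intro p hp
    simp only [Finset.mem_filter] at hp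
    exact SimpleGraph.mem_edgeFinset.mpr hp.2
  have key := Finset.sum_fiberwise_of_maps_to maps (fun p : V × V => f p.1 p.2)
  have inner : ∀ e ∈ G.edgeFinset,
      (∑ p ∈ (Finset.univ.filter fun p : V × V => G.Adj p.1 p.2).filter
        (fun p => Sym2.mk p.1 p.2 = e), f p.1 p.2) = 2 * Sym2.lift ⟨f, hf⟩ e := by
    intro e he
    induction e with
    | _ a b =>
      rw [SimpleGraph.mem_edgeFinset, SimpleGraph.mem_edgeSet] at he
      have hfib : (Finset.univ.filter fun p : V × V => G.Adj p.1 p.2).filter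
          (fun p => Sym2.mk p.1 p.2 = s(a, b)) = {(a, b), (b, a)} := by
        ext ⟨x, y⟩
        simp only [Finset.mem_filter, Finset.mem_univ, true_and, Finset.mem_insert,
          Finset.mem_singleton, Prod.mk.injEq]
        constructor
        · rintro ⟨-, h⟩
          rw [show (Sym2.mk x y) = s(x,y) from rfl, Sym2.eq_iff] at h
          tauto
        · rintro (⟨rfl, rfl⟩ | ⟨rfl, rfl⟩)
          · exact ⟨he, rfl⟩
          · exact ⟨he.symm, Sym2.eq_swap⟩
      rw [hfib, Finset.sum_pair (by
        intro h
        rw [Prod.mk.injEq] at h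
        exact he.ne h.1)]
      simp only [Sym2.lift_mk]
      rw [hf b a]; ring
  rw [Finset.sum_congr rfl inner] at key
  rw [← Finset.mul_sum] at key
  have h4 : ∑ e ∈ G.edgeFinset, Sym2.lift ⟨f, hf⟩ e
      = (1/2) * ∑ p ∈ Finset.univ.filter (fun p : V × V => G.Adj p.1 p.2), f p.1 p.2 := by
    rw [← key]; ring
  rw [h4, Finset.sum_filter, Fintype.sum_prod_type]

private lemma harmonic_eq {V : Type*} [Fintype V] (G : SimpleGraph V) :
    G.harmonicIndex = (1/2) * ∑ x, ∑ y,
      if G.Adj x y then 2 / ((G.degree x : ℝ) + (G.degree y : ℝ)) else 0 :=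
  sum_edges_eq G _ _

private lemma sum_ite_ne_real {k : ℕ} (b : Fin k) (c : ℝ) :
    (∑ x : Fin k, if b = x then 0 else c) = (k : ℝ) * c - c := by
  have h : ∀ x : Fin k, (if b = x then (0:ℝ) else c) = c - (if b = x then c else 0) := by
    intro x; by_cases hx : b = x <;> simp [hx]
  rw [Finset.sum_congr rfl (fun x _ => h x), Finset.sum_sub_distrib]
  simp [Finset.sum_ite_eq, mul_comm]

private lemma cond_iff (m n : ℕ) (a x : Fin m) (b y : Fin n) :
    (¬(a, b) = (x, y) ∧ ∃ v : Fin m ⊕ Fin n,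
        (v = Sum.inl a ∨ v = Sum.inr b) ∧ (v = Sum.inl x ∨ v = Sum.inr y))
      ↔ ((a = x ∧ ¬ b = y) ∨ (¬ a = x ∧ b = y)) := by
  constructor
  · rintro ⟨hne, v, (rfl | rfl), (h | h)⟩ <;> simp_all [Prod.mk.injEq]
  · rintro (⟨rfl, h⟩ | ⟨h, rfl⟩)
    · exact ⟨by simp [Prod.mk.injEq, h], Sum.inl a, Or.inl rfl, Or.inl rfl⟩
    · exact ⟨by simp [Prod.mk.injEq, h], Sum.inr b, Or.inr rfl, Or.inr rfl⟩

private lemma ite_split (P Q : Prop) [Decidable P] [Decidable Q] (c : ℝ) :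
    (if (P ∧ ¬Q) ∨ (¬P ∧ Q) then c else 0)
      = (if P then if Q then 0 else c else 0) + (if Q then if P then 0 else c else 0) := by
  by_cases hP : P <;> by_cases hQ : Q <;> simp [hP, hQ]


/-- For the complete bipartite graph `K_{m,n}` with `m, n ≥ 1`,
`H(T(K_{m,n})) = mn/2 + 8mn(m + n)/((3m + n)(m + 3n))`. -/
theorem harmonicIndex_totalGraph_completeBipartite (m n : ℕ) (hm : 1 ≤ m) (hn : 1 ≤ n) :
    (completeBipartiteGraph (Fin m) (Fin n)).totalGraph.harmonicIndex
      = (m : ℝ) * (n : ℝ) / 2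
        + 8 * (m : ℝ) * (n : ℝ) * ((m : ℝ) + (n : ℝ))
            / ((3 * (m : ℝ) + (n : ℝ)) * ((m : ℝ) + 3 * (n : ℝ))) := by
  classical
  have hm0 : (0:ℝ) < m := by exact_mod_cast hm
  have hn0 : (0:ℝ) < n := by exact_mod_cast hn
  rw [harmonic_eq]
  simp only [Fintype.sum_sum_type]
  simp only [← Equiv.sum_comp (eqv m n)]
  simp only [degL, degR, degE m n hm hn]
  simp only [tg_adj_ll, tg_adj_lr, tg_adj_rl, tg_adj_rr, Ne, eqv_inj, eqv_coe, Sym2.mem_iff]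
  push_cast
  simp only [Fintype.sum_prod_type]
  simp only [cond_iff]
  simp only [ite_split]
  simp [cbg_adj_ll, cbg_adj_rr, cbg_adj_lr, cbg_adj_rl,
    Finset.sum_add_distrib, Finset.sum_ite_irrel, Finset.sum_ite_eq, Finset.sum_ite_eq',
    sum_ite_ne_real, Finset.sum_const, Finset.card_univ, Fintype.card_fin, nsmul_eq_mul]
  have h1 : (m:ℝ) + n ≠ 0 := by positivity
  have h2 : (3*(m:ℝ) + n) ≠ 0 := by positivity
  have h3 : ((m:ℝ) + 3*n) ≠ 0 := by positivity
  field_simp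
  ring
end

section
/- For the m × n grid graph G_{m,n} with m, n ≥ 5, the harmonic index of its total graph satisfies H(T(G_{m,n})) = M₁(G_{m,n})/16 + mn/2 + (653/1820)(m + n) − 51739/90090; equivalently, H(T(G_{m,n})) = (3/2)mn − (1879/3640)(m + n) − 3347/45045. -/
open scoped Classical

open Finset

namespace TotalAux
open Finset SimpleGraph

set_option linter.unusedSectionVars false

variable {V : Type*} [Fintype V] (G : SimpleGraph V)

theorem ite_inst {α : Sort*} {P : Prop} (h1 h2 : Decidable P) (a b : α) :
    @ite α P h1 a b = @ite α P h2 a b := by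
  cases Subsingleton.elim h1 h2; rfl


theorem sum_nbr_eq_sum_ite {M : Type*} [AddCommMonoid M] (v : V) (f : V → M) :
    ∑ u ∈ G.neighborFinset v, f u = ∑ u : V, if G.Adj v u then f u else 0 := by
  rw [SimpleGraph.neighborFinset_eq_filter, Finset.sum_filter]

theorem filter_incid (v : V) :
    {e ∈ G.edgeFinset | v ∈ e} = (G.neighborFinset v).image (fun u => s(v, u)) := by
  ext e
  simp only [Finset.mem_filter, Finset.mem_image, SimpleGraph.mem_edgeFinset,
    SimpleGraph.mem_neighborFinset]
  constructor
  · rintro ⟨he, hv⟩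
    induction e with
    | _ a b =>
      rw [SimpleGraph.mem_edgeSet] at he
      rcases Sym2.mem_iff.mp hv with rfl | rfl
      · exact ⟨b, he, rfl⟩
      · exact ⟨a, he.symm, Sym2.eq_swap⟩
  · rintro ⟨u, hu, rfl⟩
    exact ⟨SimpleGraph.mem_edgeSet G |>.mpr hu, Sym2.mem_mk_left v u⟩

theorem sum_incid {M : Type*} [AddCommMonoid M] (v : V) (f : Sym2 V → M) :
    (∑ e ∈ G.edgeFinset, if v ∈ e then f e else 0) = ∑ u ∈ G.neighborFinset v, f s(v, u) := by
  rw [← Finset.sum_filter, filter_incid, Finset.sum_image]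
  intro a _ b _ h
  exact Sym2.congr_right.mp h

theorem sum_darts (f : V → V → ℝ) :
    ∑ d : G.Dart, f d.toProd.1 d.toProd.2 = ∑ v, ∑ u ∈ G.neighborFinset v, f v u := by
  classical
  rw [← Finset.sum_fiberwise_of_maps_to (g := fun d : G.Dart => d.toProd.1)
    (t := Finset.univ) (fun x _ => Finset.mem_univ _)]
  refine Finset.sum_congr rfl fun v _ => ?_
  have h1 : (Finset.univ.filter fun d : G.Dart => d.toProd.1 = v)
      = Finset.univ.image (G.dartOfNeighborSet v) := G.dart_fst_fiber v
  rw [h1, Finset.sum_image (fun a _ b _ h => G.dartOfNeighborSet_injective v h)]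
  rw [SimpleGraph.neighborFinset_def,
    Finset.sum_subtype (Set.toFinset (G.neighborSet v)) (fun x => Set.mem_toFinset) (fun u => f v u)]
  exact Finset.sum_congr rfl fun x _ => rfl

theorem sum_darts_edge (F : Sym2 V → ℝ) :
    ∑ d : G.Dart, F d.edge = 2 * ∑ e ∈ G.edgeFinset, F e := by
  classical
  rw [← Finset.sum_fiberwise_of_maps_to (g := fun d : G.Dart => d.edge)
    (t := G.edgeFinset) (fun d _ => by simp [SimpleGraph.Dart.edge_mem]), Finset.mul_sum]
  refine Finset.sum_congr rfl fun e he => ?_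
  rw [Finset.sum_congr rfl (fun d hd => by rw [(Finset.mem_filter.mp hd).2]),
    Finset.sum_const, G.dart_edge_fiber_card e (SimpleGraph.mem_edgeFinset.mp he)]
  simp [mul_comm]

theorem two_mul_sum_edge (F : Sym2 V → ℝ) :
    2 * ∑ e ∈ G.edgeFinset, F e = ∑ v, ∑ u ∈ G.neighborFinset v, F s(v, u) := by
  rw [← sum_darts_edge, ← sum_darts G (fun v u => F s(v, u))]
  exact Finset.sum_congr rfl fun d _ => rfl

theorem degree_eq_sum {V' : Type*} [Fintype V'] (G' : SimpleGraph V') (x : V') :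
    G'.degree x = ∑ y : V', if G'.Adj x y then 1 else 0 := by
  rw [SimpleGraph.degree, SimpleGraph.neighborFinset_eq_filter, Finset.card_filter]

theorem sum_mem_pair {M : Type*} [AddCommMonoid M] {a b : V} (hab : a ≠ b) (g : V → M) :
    (∑ v : V, if v ∈ s(a, b) then g v else 0) = g a + g b := by
  have h : ∀ v : V, (if v ∈ s(a, b) then g v else 0)
      = (if v = a then g v else 0) + (if v = b then g v else 0) := by
    intro v
    by_cases h1 : v = a
    · subst h1; simp [Sym2.mem_iff, hab]
    · by_cases h2 : v = b
      · subst h2; simp [Sym2.mem_iff, h1]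
      · simp [Sym2.mem_iff, h1, h2]
  simp only [h, Finset.sum_add_distrib, Finset.sum_ite_eq' Finset.univ a g,
    Finset.sum_ite_eq' Finset.univ b g, Finset.mem_univ, if_pos]

theorem shared_unique {e f : Sym2 V} (hef : e ≠ f)
    {a b : V} (ha : a ∈ e) (ha' : a ∈ f) (hb : b ∈ e) (hb' : b ∈ f) : a = b := by
  by_contra hab
  exact hef (Sym2.eq_of_ne_mem hab ha hb ha' hb')

theorem ite_shared {M : Type*} [AddCommMonoid M] {e f : Sym2 V} (c : M) :
    (if e ≠ f ∧ ∃ v, v ∈ e ∧ v ∈ f then c else 0)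
      = ∑ v : V, if v ∈ e ∧ v ∈ f ∧ e ≠ f then c else 0 := by
  by_cases h : e ≠ f ∧ ∃ v, v ∈ e ∧ v ∈ f
  · obtain ⟨hef, v₀, hv₀e, hv₀f⟩ := h
    rw [if_pos ⟨hef, v₀, hv₀e, hv₀f⟩, Finset.sum_eq_single v₀]
    · rw [if_pos ⟨hv₀e, hv₀f, hef⟩]
    · rintro b _ hb
      rw [if_neg]
      rintro ⟨h1, h2, -⟩
      exact hb (shared_unique hef h1 h2 hv₀e hv₀f)
    · intro h; exact absurd (Finset.mem_univ v₀) h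
  · rw [if_neg h, Finset.sum_eq_zero]
    intro v _
    rw [if_neg]
    rintro ⟨h1, h2, h3⟩
    exact h ⟨h3, v, h1, h2⟩

theorem degree_totalGraph_inl (v : V) :
    G.totalGraph.degree (Sum.inl v) = 2 * G.degree v := by
  rw [degree_eq_sum, Fintype.sum_sum_type]
  have h1 : (∑ u : V, if G.totalGraph.Adj (Sum.inl v) (Sum.inl u) then 1 else 0)
      = G.degree v := (degree_eq_sum G v).symm
  have h2 : (∑ e : G.edgeSet, if G.totalGraph.Adj (Sum.inl v) (Sum.inr e) then 1 else 0)
      = G.degree v := by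
    have e0 : (∑ e : G.edgeSet, if G.totalGraph.Adj (Sum.inl v) (Sum.inr e) then (1:ℕ) else 0)
        = ∑ e : G.edgeSet, (fun z : Sym2 V => if v ∈ z then (1:ℕ) else 0) (e : Sym2 V) :=
      Finset.sum_congr rfl fun e _ => ite_inst _ _ _ _
    rw [e0, ← Finset.sum_subtype G.edgeFinset (fun e => SimpleGraph.mem_edgeFinset)
      (fun z : Sym2 V => if v ∈ z then (1:ℕ) else 0), sum_incid, Finset.sum_const, smul_eq_mul, mul_one,
      SimpleGraph.card_neighborFinset_eq_degree]
  rw [h1, h2]; ring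

theorem degree_totalGraph_inr {a b : V} (h : G.Adj a b)
    (he : s(a, b) ∈ G.edgeSet := (SimpleGraph.mem_edgeSet G).mpr h) :
    G.totalGraph.degree (Sum.inr ⟨s(a, b), he⟩) = G.degree a + G.degree b := by
  have hab : a ≠ b := G.ne_of_adj h
  rw [degree_eq_sum, Fintype.sum_sum_type]
  have h1 : (∑ u : V, if G.totalGraph.Adj (Sum.inr ⟨s(a, b), he⟩) (Sum.inl u) then 1 else 0)
      = 2 := by
    have e0 : (∑ u : V, if G.totalGraph.Adj (Sum.inr ⟨s(a, b), he⟩) (Sum.inl u) then 1 else 0)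
        = ∑ u : V, if u ∈ s(a, b) then (1 : ℕ) else 0 :=
      Finset.sum_congr rfl fun u _ => ite_inst _ _ _ _
    rw [e0, sum_mem_pair hab]
  -- count of incident edges at v, other than s(a,b), plus one, is degree
  have hcnt : ∀ v w : V, G.Adj v w →
      (∑ x ∈ G.neighborFinset v, if s(v, w) ≠ s(v, x) then 1 else 0) + 1 = G.degree v := by
    intro v w hvw
    have : ∀ x ∈ G.neighborFinset v,
        (if s(v, w) ≠ s(v, x) then 1 else 0) + (if x = w then 1 else 0) = 1 := by
      intro x _
      by_cases hx : x = w
      · simp [hx]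
      · rw [if_pos, if_neg hx]
        exact fun hh => hx (Sym2.congr_right.mp hh).symm
    calc (∑ x ∈ G.neighborFinset v, if s(v, w) ≠ s(v, x) then 1 else 0) + 1
        = (∑ x ∈ G.neighborFinset v, if s(v, w) ≠ s(v, x) then 1 else 0)
          + ∑ x ∈ G.neighborFinset v, if x = w then 1 else 0 := by
          rw [Finset.sum_ite_eq' (G.neighborFinset v) w (fun _ => 1),
            if_pos ((SimpleGraph.mem_neighborFinset G v w).mpr hvw)]
      _ = ∑ x ∈ G.neighborFinset v, 1 := by
          rw [← Finset.sum_add_distrib]; exact Finset.sum_congr rfl this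
      _ = G.degree v := by
          rw [Finset.sum_const, smul_eq_mul, mul_one, SimpleGraph.card_neighborFinset_eq_degree]
  have h2 : (∑ f : G.edgeSet,
        if G.totalGraph.Adj (Sum.inr ⟨s(a, b), he⟩) (Sum.inr f) then 1 else 0)
      + 2 = G.degree a + G.degree b := by
    have step1 : (∑ f : G.edgeSet,
          if G.totalGraph.Adj (Sum.inr ⟨s(a, b), he⟩) (Sum.inr f) then 1 else 0)
        = ∑ f ∈ G.edgeFinset, if s(a, b) ≠ f ∧ ∃ v, v ∈ s(a, b) ∧ v ∈ f then (1:ℕ) else 0 := by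
      rw [Finset.sum_subtype G.edgeFinset (fun e => SimpleGraph.mem_edgeFinset)
        (fun z : Sym2 V => if s(a, b) ≠ z ∧ ∃ v, v ∈ s(a, b) ∧ v ∈ z then (1:ℕ) else 0)]
      refine Finset.sum_congr rfl fun f _ => ?_
      have hiff : G.totalGraph.Adj (Sum.inr ⟨s(a, b), he⟩) (Sum.inr f)
          ↔ (s(a, b) ≠ (f : Sym2 V) ∧ ∃ v, v ∈ s(a, b) ∧ v ∈ (f : Sym2 V)) := by
        constructor
        · rintro ⟨hne, hv⟩; exact ⟨fun hh => hne (Subtype.ext hh), hv⟩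
        · rintro ⟨hne, hv⟩; exact ⟨fun hh => hne (congrArg Subtype.val hh), hv⟩
      rw [if_congr hiff rfl rfl]
    rw [step1]
    have step2 : (∑ f ∈ G.edgeFinset,
          if s(a, b) ≠ f ∧ ∃ v, v ∈ s(a, b) ∧ v ∈ f then (1:ℕ) else 0)
        = ∑ v : V, if v ∈ s(a, b) then
            (∑ x ∈ G.neighborFinset v, if s(a, b) ≠ s(v, x) then 1 else 0) else 0 := by
      have e1 : ∀ f ∈ G.edgeFinset,
          (if s(a, b) ≠ f ∧ ∃ v, v ∈ s(a, b) ∧ v ∈ f then (1:ℕ) else 0)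
            = ∑ v : V, if v ∈ s(a, b) ∧ v ∈ f ∧ s(a, b) ≠ f then (1:ℕ) else 0 := by
        intro f _
        exact ite_shared (V := V) (e := s(a, b)) (f := f) (1 : ℕ)
      rw [Finset.sum_congr rfl e1, Finset.sum_comm]
      refine Finset.sum_congr rfl fun v _ => ?_
      by_cases hv : v ∈ s(a, b)
      · rw [if_pos hv, ← sum_incid G v (fun z => if s(a, b) ≠ z then 1 else 0)]
        refine Finset.sum_congr rfl fun f _ => ?_
        by_cases h1 : v ∈ f <;> by_cases h2 : s(a,b) = f <;> simp [hv, h1, h2]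
      · rw [if_neg hv, Finset.sum_eq_zero]
        intro f _
        rw [if_neg]; rintro ⟨h1, -, -⟩; exact hv h1
    rw [step2, sum_mem_pair hab]
    have va := hcnt a b h
    have vb := hcnt b a h.symm
    have ea : (∑ x ∈ G.neighborFinset a, if s(a, b) ≠ s(a, x) then (1:ℕ) else 0)
        + 1 = G.degree a := va
    have eb : (∑ x ∈ G.neighborFinset b, if s(a, b) ≠ s(b, x) then (1:ℕ) else 0)
        + 1 = G.degree b := by
      rw [← vb]
      congr 1
      refine Finset.sum_congr rfl fun x _ => ?_
      have : s(a, b) = s(b, a) := Sym2.eq_swap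
      rw [this]
    omega
  omega

/-- real-valued degree sum over an edge -/
noncomputable def eD : Sym2 V → ℝ :=
  Sym2.lift ⟨fun a b => (G.degree a : ℝ) + (G.degree b : ℝ), fun a b => by simp [add_comm]⟩

theorem degree_totalGraph_inr' (e : G.edgeSet) :
    ((G.totalGraph).degree (Sum.inr e) : ℝ) = eD G (e : Sym2 V) := by
  obtain ⟨z, hz⟩ := e
  induction z with
  | _ a b =>
    have h : G.Adj a b := (SimpleGraph.mem_edgeSet G).mp hz
    rw [degree_totalGraph_inr G h hz, eD]
    push_cast
    rw [Sym2.lift_mk]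

theorem adj_TG_inl_inl (u v : V) : (G.totalGraph).Adj (Sum.inl u) (Sum.inl v) ↔ G.Adj u v :=
  Iff.rfl
theorem adj_TG_inl_inr (u : V) (e : G.edgeSet) :
    (G.totalGraph).Adj (Sum.inl u) (Sum.inr e) ↔ u ∈ (e : Sym2 V) := Iff.rfl
theorem adj_TG_inr_inl (u : V) (e : G.edgeSet) :
    (G.totalGraph).Adj (Sum.inr e) (Sum.inl u) ↔ u ∈ (e : Sym2 V) := Iff.rfl
theorem adj_TG_inr_inr (e f : G.edgeSet) :
    (G.totalGraph).Adj (Sum.inr e) (Sum.inr f) ↔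
      ((e : Sym2 V) ≠ (f : Sym2 V) ∧ ∃ v, v ∈ (e : Sym2 V) ∧ v ∈ (f : Sym2 V)) := by
  constructor
  · rintro ⟨hne, hv⟩; exact ⟨fun hh => hne (Subtype.ext hh), hv⟩
  · rintro ⟨hne, hv⟩; exact ⟨fun hh => hne (congrArg Subtype.val hh), hv⟩

noncomputable def locf (v : V) : ℝ :=
  (∑ u ∈ Finset.univ.filter (G.Adj v),
      (1 / (2 * (G.degree v : ℝ) + 2 * (G.degree u : ℝ))
        + 2 / (3 * (G.degree v : ℝ) + (G.degree u : ℝ))))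
    + ∑ u ∈ Finset.univ.filter (G.Adj v), ∑ x ∈ Finset.univ.filter (G.Adj v),
        (if x = u then 0 else
          1 / (2 * (G.degree v : ℝ) + (G.degree u : ℝ) + (G.degree x : ℝ)))

theorem harmonic_total : (G.totalGraph).harmonicIndex = ∑ v : V, locf G v := by
  have key : 2 * (G.totalGraph).harmonicIndex
      = ∑ x : V ⊕ G.edgeSet, ∑ y ∈ (G.totalGraph).neighborFinset x,
          2 / (((G.totalGraph).degree x : ℝ) + ((G.totalGraph).degree y : ℝ)) := by
    rw [show (G.totalGraph).harmonicIndex = ∑ e ∈ (G.totalGraph).edgeFinset,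
      Sym2.lift ⟨fun u v => 2 / (((G.totalGraph).degree u : ℝ) + ((G.totalGraph).degree v : ℝ)),
        fun u v => by simp [add_comm]⟩ e from rfl, two_mul_sum_edge]
    exact Finset.sum_congr rfl fun x _ => Finset.sum_congr rfl fun y _ => Sym2.lift_mk _ _ _
  -- expand into four terms
  have expand : ∑ x : V ⊕ G.edgeSet, ∑ y ∈ (G.totalGraph).neighborFinset x,
          2 / (((G.totalGraph).degree x : ℝ) + ((G.totalGraph).degree y : ℝ))
      = (∑ v : V, ∑ u : V, if G.Adj v u then
            2 / (2 * (G.degree v : ℝ) + 2 * (G.degree u : ℝ)) else 0)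
        + (∑ v : V, ∑ e : G.edgeSet, if v ∈ (e : Sym2 V) then
            2 / (2 * (G.degree v : ℝ) + eD G (e : Sym2 V)) else 0)
        + ((∑ e : G.edgeSet, ∑ u : V, if u ∈ (e : Sym2 V) then
            2 / (eD G (e : Sym2 V) + 2 * (G.degree u : ℝ)) else 0)
        + (∑ e : G.edgeSet, ∑ f : G.edgeSet,
            if (e : Sym2 V) ≠ (f : Sym2 V) ∧ ∃ v, v ∈ (e : Sym2 V) ∧ v ∈ (f : Sym2 V) then
              2 / (eD G (e : Sym2 V) + eD G (f : Sym2 V)) else 0)) := by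
    rw [Fintype.sum_sum_type]
    congr 1
    · rw [← Finset.sum_add_distrib]
      refine Finset.sum_congr rfl fun v _ => ?_
      rw [sum_nbr_eq_sum_ite (G.totalGraph) (Sum.inl v), Fintype.sum_sum_type]
      congr 1
      · refine Finset.sum_congr rfl fun u _ => ?_
        rw [if_congr (adj_TG_inl_inl G v u) rfl rfl]
        by_cases h : G.Adj v u
        · rw [if_pos h, if_pos h, degree_totalGraph_inl, degree_totalGraph_inl]; push_cast; ring_nf
        · rw [if_neg h, if_neg h]
      · refine Finset.sum_congr rfl fun e _ => ?_
        rw [if_congr (adj_TG_inl_inr G v e) rfl rfl]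
        by_cases h : v ∈ (e : Sym2 V)
        · rw [if_pos h, if_pos h, degree_totalGraph_inl, degree_totalGraph_inr']; push_cast; ring_nf
        · rw [if_neg h, if_neg h]
    · rw [← Finset.sum_add_distrib]
      refine Finset.sum_congr rfl fun e _ => ?_
      rw [sum_nbr_eq_sum_ite (G.totalGraph) (Sum.inr e), Fintype.sum_sum_type]
      congr 1
      · refine Finset.sum_congr rfl fun u _ => ?_
        rw [if_congr (adj_TG_inr_inl G u e) rfl rfl]
        by_cases h : u ∈ (e : Sym2 V)
        · rw [if_pos h, if_pos h, degree_totalGraph_inl, degree_totalGraph_inr']; push_cast; ring_nf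
        · rw [if_neg h, if_neg h]
      · refine Finset.sum_congr rfl fun f _ => ?_
        rw [if_congr (adj_TG_inr_inr G e f) rfl rfl]
        by_cases h : (e : Sym2 V) ≠ (f : Sym2 V) ∧ ∃ v, v ∈ (e : Sym2 V) ∧ v ∈ (f : Sym2 V)
        · rw [if_pos h, if_pos h, degree_totalGraph_inr', degree_totalGraph_inr']
        · rw [if_neg h, if_neg h]
  -- reduce each of the four terms
  have eD_mk : ∀ a b : V, eD G s(a, b) = (G.degree a : ℝ) + (G.degree b : ℝ) := fun a b =>
    Sym2.lift_mk _ a b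
  have hT1 : (∑ v : V, ∑ u : V, if G.Adj v u then
        2 / (2 * (G.degree v : ℝ) + 2 * (G.degree u : ℝ)) else 0)
      = ∑ v : V, ∑ u ∈ G.neighborFinset v,
        2 / (2 * (G.degree v : ℝ) + 2 * (G.degree u : ℝ)) :=
    Finset.sum_congr rfl fun v _ => (sum_nbr_eq_sum_ite G v _).symm
  have incid : ∀ (v : V) (f : Sym2 V → ℝ),
      (∑ e : G.edgeSet, if v ∈ (e : Sym2 V) then f (e : Sym2 V) else 0)
        = ∑ u ∈ G.neighborFinset v, f s(v, u) := by
    intro v f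
    rw [← sum_incid G v f, Finset.sum_subtype G.edgeFinset
      (fun e => SimpleGraph.mem_edgeFinset) (fun z : Sym2 V => if v ∈ z then f z else 0)]
  have hT2 : (∑ v : V, ∑ e : G.edgeSet, if v ∈ (e : Sym2 V) then
        2 / (2 * (G.degree v : ℝ) + eD G (e : Sym2 V)) else 0)
      = ∑ v : V, ∑ u ∈ G.neighborFinset v,
        2 / (2 * (G.degree v : ℝ) + ((G.degree v : ℝ) + (G.degree u : ℝ))) := by
    refine Finset.sum_congr rfl fun v _ => ?_
    rw [incid v (fun z => 2 / (2 * (G.degree v : ℝ) + eD G z))]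
    exact Finset.sum_congr rfl fun u _ => by rw [eD_mk]
  have hT3 : (∑ e : G.edgeSet, ∑ u : V, if u ∈ (e : Sym2 V) then
        2 / (eD G (e : Sym2 V) + 2 * (G.degree u : ℝ)) else 0)
      = ∑ v : V, ∑ u ∈ G.neighborFinset v,
        2 / (((G.degree v : ℝ) + (G.degree u : ℝ)) + 2 * (G.degree v : ℝ)) := by
    rw [Finset.sum_comm]
    refine Finset.sum_congr rfl fun v _ => ?_
    rw [incid v (fun z => 2 / (eD G z + 2 * (G.degree v : ℝ)))]
    exact Finset.sum_congr rfl fun u _ => by rw [eD_mk]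
  have hT4 : (∑ e : G.edgeSet, ∑ f : G.edgeSet,
        if (e : Sym2 V) ≠ (f : Sym2 V) ∧ ∃ v, v ∈ (e : Sym2 V) ∧ v ∈ (f : Sym2 V) then
          2 / (eD G (e : Sym2 V) + eD G (f : Sym2 V)) else 0)
      = ∑ v : V, ∑ u ∈ G.neighborFinset v, ∑ x ∈ G.neighborFinset v,
          (if x = u then 0 else
            2 / (((G.degree v : ℝ) + (G.degree u : ℝ))
              + ((G.degree v : ℝ) + (G.degree x : ℝ)))) := by
    have step1 : (∑ e : G.edgeSet, ∑ f : G.edgeSet,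
          if (e : Sym2 V) ≠ (f : Sym2 V) ∧ ∃ v, v ∈ (e : Sym2 V) ∧ v ∈ (f : Sym2 V) then
            2 / (eD G (e : Sym2 V) + eD G (f : Sym2 V)) else 0)
        = ∑ v : V, ∑ e : G.edgeSet, ∑ f : G.edgeSet,
            if v ∈ (e : Sym2 V) ∧ v ∈ (f : Sym2 V) ∧ (e : Sym2 V) ≠ (f : Sym2 V) then
              2 / (eD G (e : Sym2 V) + eD G (f : Sym2 V)) else 0 := by
      calc (∑ e : G.edgeSet, ∑ f : G.edgeSet,
          if (e : Sym2 V) ≠ (f : Sym2 V) ∧ ∃ v, v ∈ (e : Sym2 V) ∧ v ∈ (f : Sym2 V) then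
            2 / (eD G (e : Sym2 V) + eD G (f : Sym2 V)) else 0)
          = ∑ e : G.edgeSet, ∑ f : G.edgeSet, ∑ v : V,
              if v ∈ (e : Sym2 V) ∧ v ∈ (f : Sym2 V) ∧ (e : Sym2 V) ≠ (f : Sym2 V) then
                2 / (eD G (e : Sym2 V) + eD G (f : Sym2 V)) else 0 :=
            Finset.sum_congr rfl fun e _ => Finset.sum_congr rfl fun f _ => ite_shared _
        _ = ∑ e : G.edgeSet, ∑ v : V, ∑ f : G.edgeSet,
              if v ∈ (e : Sym2 V) ∧ v ∈ (f : Sym2 V) ∧ (e : Sym2 V) ≠ (f : Sym2 V) then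
                2 / (eD G (e : Sym2 V) + eD G (f : Sym2 V)) else 0 :=
            Finset.sum_congr rfl fun e _ => Finset.sum_comm
        _ = ∑ v : V, ∑ e : G.edgeSet, ∑ f : G.edgeSet,
              if v ∈ (e : Sym2 V) ∧ v ∈ (f : Sym2 V) ∧ (e : Sym2 V) ≠ (f : Sym2 V) then
                2 / (eD G (e : Sym2 V) + eD G (f : Sym2 V)) else 0 := Finset.sum_comm
    rw [step1]
    refine Finset.sum_congr rfl fun v _ => ?_
    have step2 : ∀ e : G.edgeSet, (∑ f : G.edgeSet,
          if v ∈ (e : Sym2 V) ∧ v ∈ (f : Sym2 V) ∧ (e : Sym2 V) ≠ (f : Sym2 V) then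
            2 / (eD G (e : Sym2 V) + eD G (f : Sym2 V)) else 0)
        = if v ∈ (e : Sym2 V) then (∑ f : G.edgeSet,
            if v ∈ (f : Sym2 V) ∧ (e : Sym2 V) ≠ (f : Sym2 V) then
              2 / (eD G (e : Sym2 V) + eD G (f : Sym2 V)) else 0) else 0 := by
      intro e
      by_cases h : v ∈ (e : Sym2 V)
      · rw [if_pos h]
        refine Finset.sum_congr rfl fun f _ => ?_
        by_cases h2 : v ∈ (f : Sym2 V) ∧ (e : Sym2 V) ≠ (f : Sym2 V)
        · rw [if_pos h2, if_pos ⟨h, h2⟩]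
        · rw [if_neg h2, if_neg fun hh => h2 ⟨hh.2.1, hh.2.2⟩]
      · rw [if_neg h, Finset.sum_eq_zero]
        intro f _
        exact if_neg fun hh => h hh.1
    rw [Finset.sum_congr rfl fun e _ => step2 e]
    have inner : ∀ z : Sym2 V, (∑ f : G.edgeSet,
          if v ∈ (f : Sym2 V) ∧ z ≠ (f : Sym2 V) then 2 / (eD G z + eD G (f : Sym2 V)) else 0)
        = ∑ x ∈ G.neighborFinset v, if z ≠ s(v, x) then 2 / (eD G z + eD G s(v, x)) else 0 := by
      intro z
      rw [← incid v (fun z' => if z ≠ z' then 2 / (eD G z + eD G z') else 0)]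
      refine Finset.sum_congr rfl fun f _ => ?_
      by_cases h1 : v ∈ (f : Sym2 V)
      · rw [if_pos h1]
        by_cases h2 : z ≠ (f : Sym2 V)
        · rw [if_pos ⟨h1, h2⟩, if_pos h2]
        · rw [if_neg fun hh => h2 hh.2, if_neg h2]
      · rw [if_neg h1, if_neg fun hh => h1 hh.1]
    rw [Finset.sum_congr rfl fun e (_ : e ∈ Finset.univ) => by rw [inner (e : Sym2 V)],
      incid v (fun z => ∑ x ∈ G.neighborFinset v,
        if z ≠ s(v, x) then 2 / (eD G z + eD G s(v, x)) else 0)]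
    refine Finset.sum_congr rfl fun u _ => Finset.sum_congr rfl fun x _ => ?_
    by_cases h : x = u
    · subst h
      rw [if_neg (fun hh => hh rfl), if_pos rfl]
    · rw [if_pos (fun hh => h (Sym2.congr_right.mp hh).symm), if_neg h, eD_mk, eD_mk]
  -- assemble
  have per_v : ∀ v : V, 2 * locf G v
      = (∑ u ∈ G.neighborFinset v,
          2 / (2 * (G.degree v : ℝ) + 2 * (G.degree u : ℝ)))
        + (∑ u ∈ G.neighborFinset v,
          2 / (2 * (G.degree v : ℝ) + ((G.degree v : ℝ) + (G.degree u : ℝ))))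
        + ((∑ u ∈ G.neighborFinset v,
          2 / (((G.degree v : ℝ) + (G.degree u : ℝ)) + 2 * (G.degree v : ℝ)))
        + ∑ u ∈ G.neighborFinset v, ∑ x ∈ G.neighborFinset v,
          (if x = u then 0 else
            2 / (((G.degree v : ℝ) + (G.degree u : ℝ))
              + ((G.degree v : ℝ) + (G.degree x : ℝ))))) := by
    intro v
    rw [locf, ← SimpleGraph.neighborFinset_eq_filter, mul_add, Finset.mul_sum, Finset.mul_sum]
    have e1 : (∑ u ∈ G.neighborFinset v, 2 * (1 / (2 * (G.degree v : ℝ) + 2 * (G.degree u : ℝ))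
          + 2 / (3 * (G.degree v : ℝ) + (G.degree u : ℝ))))
        = (∑ u ∈ G.neighborFinset v,
            2 / (2 * (G.degree v : ℝ) + 2 * (G.degree u : ℝ)))
          + (∑ u ∈ G.neighborFinset v,
            2 / (2 * (G.degree v : ℝ) + ((G.degree v : ℝ) + (G.degree u : ℝ))))
          + (∑ u ∈ G.neighborFinset v,
            2 / (((G.degree v : ℝ) + (G.degree u : ℝ)) + 2 * (G.degree v : ℝ))) := by
      rw [← Finset.sum_add_distrib, ← Finset.sum_add_distrib]
      refine Finset.sum_congr rfl fun u _ => ?_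
      ring
    have e2 : (∑ u ∈ G.neighborFinset v, 2 * ∑ x ∈ G.neighborFinset v,
          (if x = u then 0 else
            1 / (2 * (G.degree v : ℝ) + (G.degree u : ℝ) + (G.degree x : ℝ))))
        = ∑ u ∈ G.neighborFinset v, ∑ x ∈ G.neighborFinset v,
          (if x = u then 0 else
            2 / (((G.degree v : ℝ) + (G.degree u : ℝ))
              + ((G.degree v : ℝ) + (G.degree x : ℝ)))) := by
      refine Finset.sum_congr rfl fun u _ => ?_
      rw [Finset.mul_sum]
      refine Finset.sum_congr rfl fun x _ => ?_
      by_cases h : x = u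
      · rw [if_pos h, if_pos h, mul_zero]
      · rw [if_neg h, if_neg h]; ring
    rw [e1, e2]
    ring
  have big : ∑ v : V, 2 * locf G v
      = (∑ v : V, ∑ u ∈ G.neighborFinset v,
          2 / (2 * (G.degree v : ℝ) + 2 * (G.degree u : ℝ)))
        + (∑ v : V, ∑ u ∈ G.neighborFinset v,
          2 / (2 * (G.degree v : ℝ) + ((G.degree v : ℝ) + (G.degree u : ℝ))))
        + ((∑ v : V, ∑ u ∈ G.neighborFinset v,
          2 / (((G.degree v : ℝ) + (G.degree u : ℝ)) + 2 * (G.degree v : ℝ)))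
        + ∑ v : V, ∑ u ∈ G.neighborFinset v, ∑ x ∈ G.neighborFinset v,
          (if x = u then 0 else
            2 / (((G.degree v : ℝ) + (G.degree u : ℝ))
              + ((G.degree v : ℝ) + (G.degree x : ℝ))))) := by
    rw [Finset.sum_congr rfl fun v _ => per_v v, Finset.sum_add_distrib,
      Finset.sum_add_distrib, Finset.sum_add_distrib]
  have final : 2 * (G.totalGraph).harmonicIndex = 2 * ∑ v : V, locf G v := by
    rw [key, expand, hT1, hT2, hT3, hT4, Finset.mul_sum, ← big]
  exact mul_left_cancel₀ two_ne_zero final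


end TotalAux

namespace TotalAux
open Finset SimpleGraph
set_option linter.unusedVariables false
set_option linter.unusedSectionVars false
set_option maxHeartbeats 1000000

variable {V : Type*} [Fintype V] [DecidableEq V] (G : SimpleGraph V)

set_option linter.unusedVariables false
set_option linter.unusedSectionVars false
set_option maxHeartbeats 1000000


/-- weight for one neighbor -/
noncomputable def w1 (D d : ℝ) : ℝ := 1 / (2 * D + 2 * d) + 2 / (3 * D + d)
/-- weight for a pair of distinct neighbors -/
noncomputable def w2 (D d d' : ℝ) : ℝ := 2 / (2 * D + d + d')

theorem locf_of_pair (v a b : V) (hab : a ≠ b)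
    (hN : Finset.univ.filter (G.Adj v) = {a, b}) :
    locf G v = w1 (G.degree v) (G.degree a) + w1 (G.degree v) (G.degree b)
      + w2 (G.degree v) (G.degree a) (G.degree b) := by
  rw [locf, hN]
  simp [Finset.sum_insert, Finset.mem_singleton, hab, hab.symm, w1, w2]
  ring

theorem locf_of_triple (v a b c : V) (hab : a ≠ b) (hac : a ≠ c) (hbc : b ≠ c)
    (hN : Finset.univ.filter (G.Adj v) = {a, b, c}) :
    locf G v = w1 (G.degree v) (G.degree a) + w1 (G.degree v) (G.degree b)
      + w1 (G.degree v) (G.degree c)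
      + w2 (G.degree v) (G.degree a) (G.degree b)
      + w2 (G.degree v) (G.degree a) (G.degree c)
      + w2 (G.degree v) (G.degree b) (G.degree c) := by
  rw [locf, hN]
  simp [Finset.sum_insert, Finset.mem_insert, Finset.mem_singleton, hab, hab.symm, hac, hac.symm,
    hbc, hbc.symm, w1, w2]
  ring

theorem locf_of_quad (v a b c d : V) (hab : a ≠ b) (hac : a ≠ c) (had : a ≠ d)
    (hbc : b ≠ c) (hbd : b ≠ d) (hcd : c ≠ d)
    (hN : Finset.univ.filter (G.Adj v) = {a, b, c, d}) :
    locf G v = w1 (G.degree v) (G.degree a) + w1 (G.degree v) (G.degree b)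
      + w1 (G.degree v) (G.degree c) + w1 (G.degree v) (G.degree d)
      + w2 (G.degree v) (G.degree a) (G.degree b)
      + w2 (G.degree v) (G.degree a) (G.degree c)
      + w2 (G.degree v) (G.degree a) (G.degree d)
      + w2 (G.degree v) (G.degree b) (G.degree c)
      + w2 (G.degree v) (G.degree b) (G.degree d)
      + w2 (G.degree v) (G.degree c) (G.degree d) := by
  rw [locf, hN]
  simp [Finset.sum_insert, Finset.mem_insert, Finset.mem_singleton, hab, hab.symm, hac, hac.symm,
    had, had.symm, hbc, hbc.symm, hbd, hbd.symm, hcd, hcd.symm, w1, w2]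
  ring




theorem pg_nbr_0 {m : ℕ} (hm : 2 ≤ m) (h0 : 0 < m) (h1 : 1 < m) :
    (pathGraph m).neighborFinset ⟨0, h0⟩ = {⟨1, h1⟩} := by
  ext ⟨x, hx⟩
  simp [SimpleGraph.mem_neighborFinset, pathGraph_adj, Fin.ext_iff]
  omega

theorem pg_nbr_1 {m : ℕ} (hm : 3 ≤ m) (h1 : 1 < m) (h0 : 0 < m) (h2 : 2 < m) :
    (pathGraph m).neighborFinset ⟨1, h1⟩ = {⟨0, h0⟩, ⟨2, h2⟩} := by
  ext ⟨x, hx⟩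
  simp [SimpleGraph.mem_neighborFinset, pathGraph_adj, Fin.ext_iff]
  omega

theorem pg_nbr_mid {m k : ℕ} (h1 : 1 ≤ k) (h2 : k + 1 < m) (hk : k < m)
    (ha : k - 1 < m) (hb : k + 1 < m) :
    (pathGraph m).neighborFinset ⟨k, hk⟩ = {⟨k - 1, ha⟩, ⟨k + 1, hb⟩} := by
  ext ⟨x, hx⟩
  simp [SimpleGraph.mem_neighborFinset, pathGraph_adj, Fin.ext_iff]
  omega

theorem pg_nbr_pen {m : ℕ} (hm : 4 ≤ m) (hp : m - 2 < m) (ha : m - 3 < m) (hb : m - 1 < m) :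
    (pathGraph m).neighborFinset ⟨m - 2, hp⟩ = {⟨m - 3, ha⟩, ⟨m - 1, hb⟩} := by
  ext ⟨x, hx⟩
  simp [SimpleGraph.mem_neighborFinset, pathGraph_adj, Fin.ext_iff]
  omega

theorem pg_nbr_last {m : ℕ} (hm : 2 ≤ m) (h0 : m - 1 < m) (h1 : m - 2 < m) :
    (pathGraph m).neighborFinset ⟨m - 1, h0⟩ = {⟨m - 2, h1⟩} := by
  ext ⟨x, hx⟩
  simp [SimpleGraph.mem_neighborFinset, pathGraph_adj, Fin.ext_iff]
  omega

theorem pg_deg_0 {m : ℕ} (hm : 2 ≤ m) {h0 : 0 < m} :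
    (pathGraph m).degree ⟨0, h0⟩ = 1 := by
  rw [SimpleGraph.degree, pg_nbr_0 hm h0 (by omega)]
  simp

theorem pg_deg_last {m : ℕ} (hm : 2 ≤ m) {h0 : m - 1 < m} :
    (pathGraph m).degree ⟨m - 1, h0⟩ = 1 := by
  rw [SimpleGraph.degree, pg_nbr_last hm h0 (by omega)]
  simp

theorem pg_deg_mid {m : ℕ} {k : ℕ} (h1 : 1 ≤ k) (h2 : k + 1 < m) {hk : k < m} :
    (pathGraph m).degree ⟨k, hk⟩ = 2 := by
  rw [SimpleGraph.degree, pg_nbr_mid h1 h2 hk (by omega) (by omega)]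
  rw [Finset.card_insert_of_notMem (by simp only [Finset.mem_singleton, Fin.mk.injEq]; omega)]
  simp

theorem pg_deg_1 {m : ℕ} (hm : 3 ≤ m) {h1 : 1 < m} :
    (pathGraph m).degree ⟨1, h1⟩ = 2 :=
  pg_deg_mid (le_refl 1) (by omega)

theorem pg_deg_2 {m : ℕ} (hm : 4 ≤ m) {h2 : 2 < m} :
    (pathGraph m).degree ⟨2, h2⟩ = 2 :=
  pg_deg_mid (by omega) (by omega)

theorem pg_deg_m3 {m : ℕ} (hm : 5 ≤ m) {h : m - 3 < m} :
    (pathGraph m).degree ⟨m - 3, h⟩ = 2 := by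
  have := pg_deg_mid (m := m) (k := m - 3) (by omega) (by omega) (hk := h)
  exact this

theorem pg_deg_pen {m : ℕ} (hm : 4 ≤ m) {h : m - 2 < m} :
    (pathGraph m).degree ⟨m - 2, h⟩ = 2 := by
  have := pg_deg_mid (m := m) (k := m - 2) (by omega) (by omega) (hk := h)
  exact this


variable {m n : ℕ}



theorem pg_adj_of_nbr1 {m : ℕ} {i i' : Fin m}
    (hi : (pathGraph m).neighborFinset i = {i'}) :
    ∀ x, (pathGraph m).Adj i x ↔ x = i' := fun x => by
  rw [← SimpleGraph.mem_neighborFinset, hi, Finset.mem_singleton]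

theorem pg_adj_of_nbr2 {m : ℕ} {i i₁ i₂ : Fin m}
    (hi : (pathGraph m).neighborFinset i = {i₁, i₂}) :
    ∀ x, (pathGraph m).Adj i x ↔ x = i₁ ∨ x = i₂ := fun x => by
  rw [← SimpleGraph.mem_neighborFinset, hi, Finset.mem_insert, Finset.mem_singleton]

theorem grid_nbr_11 (i i' : Fin m) (j j' : Fin n)
    (hi : (pathGraph m).neighborFinset i = {i'}) (hj : (pathGraph n).neighborFinset j = {j'})
    :
    Finset.univ.filter ((((pathGraph m).boxProd (pathGraph n))).Adj (i, j))
      = {(i', j), (i, j')} := by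
  ext ⟨a, b⟩
  rw [Finset.mem_filter]
  simp only [Finset.mem_univ, true_and, SimpleGraph.boxProd_adj]
  simp [pg_adj_of_nbr1 hi, pg_adj_of_nbr1 hj, Prod.ext_iff]
  tauto

theorem grid_nbr_21 (i i₁ i₂ : Fin m) (j j' : Fin n)
    (hi : (pathGraph m).neighborFinset i = {i₁, i₂})
    (hj : (pathGraph n).neighborFinset j = {j'})
    :
    Finset.univ.filter ((((pathGraph m).boxProd (pathGraph n))).Adj (i, j))
      = {(i₁, j), (i₂, j), (i, j')} := by
  ext ⟨a, b⟩
  rw [Finset.mem_filter]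
  simp only [Finset.mem_univ, true_and, SimpleGraph.boxProd_adj]
  simp [pg_adj_of_nbr2 hi, pg_adj_of_nbr1 hj, Prod.ext_iff]
  tauto

theorem grid_nbr_12 (i i' : Fin m) (j j₁ j₂ : Fin n)
    (hi : (pathGraph m).neighborFinset i = {i'})
    (hj : (pathGraph n).neighborFinset j = {j₁, j₂})
    :
    Finset.univ.filter ((((pathGraph m).boxProd (pathGraph n))).Adj (i, j))
      = {(i', j), (i, j₁), (i, j₂)} := by
  ext ⟨a, b⟩
  rw [Finset.mem_filter]
  simp only [Finset.mem_univ, true_and, SimpleGraph.boxProd_adj]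
  simp [pg_adj_of_nbr1 hi, pg_adj_of_nbr2 hj, Prod.ext_iff]
  tauto

theorem grid_nbr_22 (i i₁ i₂ : Fin m) (j j₁ j₂ : Fin n)
    (hi : (pathGraph m).neighborFinset i = {i₁, i₂})
    (hj : (pathGraph n).neighborFinset j = {j₁, j₂})
    :
    Finset.univ.filter ((((pathGraph m).boxProd (pathGraph n))).Adj (i, j))
      = {(i₁, j), (i₂, j), (i, j₁), (i, j₂)} := by
  ext ⟨a, b⟩
  rw [Finset.mem_filter]
  simp only [Finset.mem_univ, true_and, SimpleGraph.boxProd_adj]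
  simp [pg_adj_of_nbr2 hi, pg_adj_of_nbr2 hj, Prod.ext_iff]
  tauto

theorem grid_deg (i : Fin m) (j : Fin n)
    {inst : Fintype (((pathGraph m).boxProd (pathGraph n)).neighborSet (i, j))} :
    @SimpleGraph.degree _ ((pathGraph m).boxProd (pathGraph n)) (i, j) inst
      = (pathGraph m).degree i + (pathGraph n).degree j :=
  SimpleGraph.degree_boxProd (i, j)


end TotalAux

namespace TotalAux
open Finset SimpleGraph
set_option linter.unusedVariables false
set_option maxHeartbeats 1000000
variable {m n : ℕ}

theorem val_0_0 (hm : 5 ≤ m) (hn : 5 ≤ n) (i : Fin m) (j : Fin n) (hic : (i : Fin m).val = 0) (hjc : (j : Fin n).val = 0) :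
    locf ((pathGraph m).boxProd (pathGraph n)) (i, j) = 38/45 := by
  obtain ⟨iv, hivlt⟩ := i
  obtain ⟨jv, hjvlt⟩ := j
  replace hic : iv = 0 := hic
  subst hic
  replace hjc : jv = 0 := hjc
  subst hjc
  have hN := grid_nbr_11 ⟨0, hivlt⟩ (⟨1, by omega⟩ : Fin m) ⟨0, hjvlt⟩ (⟨1, by omega⟩ : Fin n)
      (pg_nbr_0 (by omega) _ _) (pg_nbr_0 (by omega) _ _)
  have hrw := locf_of_pair ((pathGraph m).boxProd (pathGraph n)) (⟨0, hivlt⟩, ⟨0, hjvlt⟩) (⟨1, by omega⟩, ⟨0, hjvlt⟩) (⟨0, hivlt⟩, ⟨1, by omega⟩)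
      (by simp only [ne_eq, Prod.mk.injEq, Fin.mk.injEq, not_and]; omega) hN
  rw [hrw]
  simp only [grid_deg]
  rw [pg_deg_0 (by omega), pg_deg_0 (by omega), pg_deg_1 (by omega), pg_deg_1 (by omega)]
  norm_num [w1, w2]


theorem val_0_1 (hm : 5 ≤ m) (hn : 5 ≤ n) (i : Fin m) (j : Fin n) (hic : (i : Fin m).val = 0) (hjc : (j : Fin n).val = 1) :
    locf ((pathGraph m).boxProd (pathGraph n)) (i, j) = 75641/60060 := by
  obtain ⟨iv, hivlt⟩ := i
  obtain ⟨jv, hjvlt⟩ := j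
  replace hic : iv = 0 := hic
  subst hic
  replace hjc : jv = 1 := hjc
  subst hjc
  have hN := grid_nbr_12 ⟨0, hivlt⟩ (⟨1, by omega⟩ : Fin m) ⟨1, hjvlt⟩ (⟨0, by omega⟩ : Fin n) (⟨2, by omega⟩ : Fin n)
      (pg_nbr_0 (by omega) _ _) (pg_nbr_1 (by omega) _ _ _)
  have hrw := locf_of_triple ((pathGraph m).boxProd (pathGraph n)) (⟨0, hivlt⟩, ⟨1, hjvlt⟩) (⟨1, by omega⟩, ⟨1, hjvlt⟩) (⟨0, hivlt⟩, ⟨0, by omega⟩) (⟨0, hivlt⟩, ⟨2, by omega⟩)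
      (by simp only [ne_eq, Prod.mk.injEq, Fin.mk.injEq, not_and]; omega) (by simp only [ne_eq, Prod.mk.injEq, Fin.mk.injEq, not_and]; omega) (by simp only [ne_eq, Prod.mk.injEq, Fin.mk.injEq, not_and]; omega) hN
  rw [hrw]
  simp only [grid_deg]
  rw [pg_deg_0 (by omega), pg_deg_1 (by omega), pg_deg_1 (by omega), pg_deg_0 (by omega), pg_deg_2 (by omega)]
  norm_num [w1, w2]


theorem val_0_2 (hm : 5 ≤ m) (hn : 5 ≤ n) (i : Fin m) (j : Fin n) (hic : (i : Fin m).val = 0) (hjc1 : 2 ≤ (j : Fin n).val) (hjc2 : (j : Fin n).val + 2 < n) :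
    locf ((pathGraph m).boxProd (pathGraph n)) (i, j) = 655/546 := by
  obtain ⟨iv, hivlt⟩ := i
  obtain ⟨jv, hjvlt⟩ := j
  replace hic : iv = 0 := hic
  subst hic
  replace hjc1 : 2 ≤ jv := hjc1
  replace hjc2 : jv + 2 < n := hjc2
  have hN := grid_nbr_12 ⟨0, hivlt⟩ (⟨1, by omega⟩ : Fin m) ⟨jv, hjvlt⟩ (⟨jv - 1, by omega⟩ : Fin n) (⟨jv + 1, by omega⟩ : Fin n)
      (pg_nbr_0 (by omega) _ _) (pg_nbr_mid (by omega) (by omega) _ _ _)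
  have hrw := locf_of_triple ((pathGraph m).boxProd (pathGraph n)) (⟨0, hivlt⟩, ⟨jv, hjvlt⟩) (⟨1, by omega⟩, ⟨jv, hjvlt⟩) (⟨0, hivlt⟩, ⟨jv - 1, by omega⟩) (⟨0, hivlt⟩, ⟨jv + 1, by omega⟩)
      (by simp only [ne_eq, Prod.mk.injEq, Fin.mk.injEq, not_and]; omega) (by simp only [ne_eq, Prod.mk.injEq, Fin.mk.injEq, not_and]; omega) (by simp only [ne_eq, Prod.mk.injEq, Fin.mk.injEq, not_and]; omega) hN
  rw [hrw]
  simp only [grid_deg]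
  rw [pg_deg_0 (by omega), pg_deg_mid (k := jv) (by omega) (by omega), pg_deg_1 (by omega), pg_deg_mid (k := jv - 1) (by omega) (by omega), pg_deg_mid (k := jv + 1) (by omega) (by omega)]
  norm_num [w1, w2]


theorem val_0_3 (hm : 5 ≤ m) (hn : 5 ≤ n) (i : Fin m) (j : Fin n) (hic : (i : Fin m).val = 0) (hjc : (j : Fin n).val = n - 2) :
    locf ((pathGraph m).boxProd (pathGraph n)) (i, j) = 75641/60060 := by
  obtain ⟨iv, hivlt⟩ := i
  obtain ⟨jv, hjvlt⟩ := j
  replace hic : iv = 0 := hic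
  subst hic
  replace hjc : jv = n - 2 := hjc
  subst hjc
  have hN := grid_nbr_12 ⟨0, hivlt⟩ (⟨1, by omega⟩ : Fin m) ⟨n - 2, hjvlt⟩ (⟨n - 3, by omega⟩ : Fin n) (⟨n - 1, by omega⟩ : Fin n)
      (pg_nbr_0 (by omega) _ _) (pg_nbr_pen (by omega) _ _ _)
  have hrw := locf_of_triple ((pathGraph m).boxProd (pathGraph n)) (⟨0, hivlt⟩, ⟨n - 2, hjvlt⟩) (⟨1, by omega⟩, ⟨n - 2, hjvlt⟩) (⟨0, hivlt⟩, ⟨n - 3, by omega⟩) (⟨0, hivlt⟩, ⟨n - 1, by omega⟩)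
      (by simp only [ne_eq, Prod.mk.injEq, Fin.mk.injEq, not_and]; omega) (by simp only [ne_eq, Prod.mk.injEq, Fin.mk.injEq, not_and]; omega) (by simp only [ne_eq, Prod.mk.injEq, Fin.mk.injEq, not_and]; omega) hN
  rw [hrw]
  simp only [grid_deg]
  rw [pg_deg_0 (by omega), pg_deg_pen (by omega), pg_deg_1 (by omega), pg_deg_m3 (by omega), pg_deg_last (by omega)]
  norm_num [w1, w2]


theorem val_0_4 (hm : 5 ≤ m) (hn : 5 ≤ n) (i : Fin m) (j : Fin n) (hic : (i : Fin m).val = 0) (hjc : (j : Fin n).val = n - 1) :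
    locf ((pathGraph m).boxProd (pathGraph n)) (i, j) = 38/45 := by
  obtain ⟨iv, hivlt⟩ := i
  obtain ⟨jv, hjvlt⟩ := j
  replace hic : iv = 0 := hic
  subst hic
  replace hjc : jv = n - 1 := hjc
  subst hjc
  have hN := grid_nbr_11 ⟨0, hivlt⟩ (⟨1, by omega⟩ : Fin m) ⟨n - 1, hjvlt⟩ (⟨n - 2, by omega⟩ : Fin n)
      (pg_nbr_0 (by omega) _ _) (pg_nbr_last (by omega) _ _)
  have hrw := locf_of_pair ((pathGraph m).boxProd (pathGraph n)) (⟨0, hivlt⟩, ⟨n - 1, hjvlt⟩) (⟨1, by omega⟩, ⟨n - 1, hjvlt⟩) (⟨0, hivlt⟩, ⟨n - 2, by omega⟩)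
      (by simp only [ne_eq, Prod.mk.injEq, Fin.mk.injEq, not_and]; omega) hN
  rw [hrw]
  simp only [grid_deg]
  rw [pg_deg_0 (by omega), pg_deg_last (by omega), pg_deg_1 (by omega), pg_deg_pen (by omega)]
  norm_num [w1, w2]


end TotalAux

namespace TotalAux
open Finset SimpleGraph
set_option linter.unusedVariables false
set_option maxHeartbeats 1000000
variable {m n : ℕ}

theorem val_1_0 (hm : 5 ≤ m) (hn : 5 ≤ n) (i : Fin m) (j : Fin n) (hic : (i : Fin m).val = 1) (hjc : (j : Fin n).val = 0) :
    locf ((pathGraph m).boxProd (pathGraph n)) (i, j) = 75641/60060 := by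
  obtain ⟨iv, hivlt⟩ := i
  obtain ⟨jv, hjvlt⟩ := j
  replace hic : iv = 1 := hic
  subst hic
  replace hjc : jv = 0 := hjc
  subst hjc
  have hN := grid_nbr_21 ⟨1, hivlt⟩ (⟨0, by omega⟩ : Fin m) (⟨2, by omega⟩ : Fin m) ⟨0, hjvlt⟩ (⟨1, by omega⟩ : Fin n)
      (pg_nbr_1 (by omega) _ _ _) (pg_nbr_0 (by omega) _ _)
  have hrw := locf_of_triple ((pathGraph m).boxProd (pathGraph n)) (⟨1, hivlt⟩, ⟨0, hjvlt⟩) (⟨0, by omega⟩, ⟨0, hjvlt⟩) (⟨2, by omega⟩, ⟨0, hjvlt⟩) (⟨1, hivlt⟩, ⟨1, by omega⟩)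
      (by simp only [ne_eq, Prod.mk.injEq, Fin.mk.injEq, not_and]; omega) (by simp only [ne_eq, Prod.mk.injEq, Fin.mk.injEq, not_and]; omega) (by simp only [ne_eq, Prod.mk.injEq, Fin.mk.injEq, not_and]; omega) hN
  rw [hrw]
  simp only [grid_deg]
  rw [pg_deg_1 (by omega), pg_deg_0 (by omega), pg_deg_0 (by omega), pg_deg_2 (by omega), pg_deg_1 (by omega)]
  norm_num [w1, w2]


theorem val_1_1 (hm : 5 ≤ m) (hn : 5 ≤ n) (i : Fin m) (j : Fin n) (hic : (i : Fin m).val = 1) (hjc : (j : Fin n).val = 1) :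
    locf ((pathGraph m).boxProd (pathGraph n)) (i, j) = 111/70 := by
  obtain ⟨iv, hivlt⟩ := i
  obtain ⟨jv, hjvlt⟩ := j
  replace hic : iv = 1 := hic
  subst hic
  replace hjc : jv = 1 := hjc
  subst hjc
  have hN := grid_nbr_22 ⟨1, hivlt⟩ (⟨0, by omega⟩ : Fin m) (⟨2, by omega⟩ : Fin m) ⟨1, hjvlt⟩ (⟨0, by omega⟩ : Fin n) (⟨2, by omega⟩ : Fin n)
      (pg_nbr_1 (by omega) _ _ _) (pg_nbr_1 (by omega) _ _ _)
  have hrw := locf_of_quad ((pathGraph m).boxProd (pathGraph n)) (⟨1, hivlt⟩, ⟨1, hjvlt⟩) (⟨0, by omega⟩, ⟨1, hjvlt⟩) (⟨2, by omega⟩, ⟨1, hjvlt⟩) (⟨1, hivlt⟩, ⟨0, by omega⟩) (⟨1, hivlt⟩, ⟨2, by omega⟩)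
      (by simp only [ne_eq, Prod.mk.injEq, Fin.mk.injEq, not_and]; omega) (by simp only [ne_eq, Prod.mk.injEq, Fin.mk.injEq, not_and]; omega) (by simp only [ne_eq, Prod.mk.injEq, Fin.mk.injEq, not_and]; omega) (by simp only [ne_eq, Prod.mk.injEq, Fin.mk.injEq, not_and]; omega) (by simp only [ne_eq, Prod.mk.injEq, Fin.mk.injEq, not_and]; omega) (by simp only [ne_eq, Prod.mk.injEq, Fin.mk.injEq, not_and]; omega) hN
  rw [hrw]
  simp only [grid_deg]
  rw [pg_deg_1 (by omega), pg_deg_1 (by omega), pg_deg_0 (by omega), pg_deg_2 (by omega), pg_deg_0 (by omega), pg_deg_2 (by omega)]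
  norm_num [w1, w2]


theorem val_1_2 (hm : 5 ≤ m) (hn : 5 ≤ n) (i : Fin m) (j : Fin n) (hic : (i : Fin m).val = 1) (hjc1 : 2 ≤ (j : Fin n).val) (hjc2 : (j : Fin n).val + 2 < n) :
    locf ((pathGraph m).boxProd (pathGraph n)) (i, j) = 2591/1680 := by
  obtain ⟨iv, hivlt⟩ := i
  obtain ⟨jv, hjvlt⟩ := j
  replace hic : iv = 1 := hic
  subst hic
  replace hjc1 : 2 ≤ jv := hjc1
  replace hjc2 : jv + 2 < n := hjc2
  have hN := grid_nbr_22 ⟨1, hivlt⟩ (⟨0, by omega⟩ : Fin m) (⟨2, by omega⟩ : Fin m) ⟨jv, hjvlt⟩ (⟨jv - 1, by omega⟩ : Fin n) (⟨jv + 1, by omega⟩ : Fin n)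
      (pg_nbr_1 (by omega) _ _ _) (pg_nbr_mid (by omega) (by omega) _ _ _)
  have hrw := locf_of_quad ((pathGraph m).boxProd (pathGraph n)) (⟨1, hivlt⟩, ⟨jv, hjvlt⟩) (⟨0, by omega⟩, ⟨jv, hjvlt⟩) (⟨2, by omega⟩, ⟨jv, hjvlt⟩) (⟨1, hivlt⟩, ⟨jv - 1, by omega⟩) (⟨1, hivlt⟩, ⟨jv + 1, by omega⟩)
      (by simp only [ne_eq, Prod.mk.injEq, Fin.mk.injEq, not_and]; omega) (by simp only [ne_eq, Prod.mk.injEq, Fin.mk.injEq, not_and]; omega) (by simp only [ne_eq, Prod.mk.injEq, Fin.mk.injEq, not_and]; omega) (by simp only [ne_eq, Prod.mk.injEq, Fin.mk.injEq, not_and]; omega) (by simp only [ne_eq, Prod.mk.injEq, Fin.mk.injEq, not_and]; omega) (by simp only [ne_eq, Prod.mk.injEq, Fin.mk.injEq, not_and]; omega) hN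
  rw [hrw]
  simp only [grid_deg]
  rw [pg_deg_1 (by omega), pg_deg_mid (k := jv) (by omega) (by omega), pg_deg_0 (by omega), pg_deg_2 (by omega), pg_deg_mid (k := jv - 1) (by omega) (by omega), pg_deg_mid (k := jv + 1) (by omega) (by omega)]
  norm_num [w1, w2]


theorem val_1_3 (hm : 5 ≤ m) (hn : 5 ≤ n) (i : Fin m) (j : Fin n) (hic : (i : Fin m).val = 1) (hjc : (j : Fin n).val = n - 2) :
    locf ((pathGraph m).boxProd (pathGraph n)) (i, j) = 111/70 := by
  obtain ⟨iv, hivlt⟩ := i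
  obtain ⟨jv, hjvlt⟩ := j
  replace hic : iv = 1 := hic
  subst hic
  replace hjc : jv = n - 2 := hjc
  subst hjc
  have hN := grid_nbr_22 ⟨1, hivlt⟩ (⟨0, by omega⟩ : Fin m) (⟨2, by omega⟩ : Fin m) ⟨n - 2, hjvlt⟩ (⟨n - 3, by omega⟩ : Fin n) (⟨n - 1, by omega⟩ : Fin n)
      (pg_nbr_1 (by omega) _ _ _) (pg_nbr_pen (by omega) _ _ _)
  have hrw := locf_of_quad ((pathGraph m).boxProd (pathGraph n)) (⟨1, hivlt⟩, ⟨n - 2, hjvlt⟩) (⟨0, by omega⟩, ⟨n - 2, hjvlt⟩) (⟨2, by omega⟩, ⟨n - 2, hjvlt⟩) (⟨1, hivlt⟩, ⟨n - 3, by omega⟩) (⟨1, hivlt⟩, ⟨n - 1, by omega⟩)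
      (by simp only [ne_eq, Prod.mk.injEq, Fin.mk.injEq, not_and]; omega) (by simp only [ne_eq, Prod.mk.injEq, Fin.mk.injEq, not_and]; omega) (by simp only [ne_eq, Prod.mk.injEq, Fin.mk.injEq, not_and]; omega) (by simp only [ne_eq, Prod.mk.injEq, Fin.mk.injEq, not_and]; omega) (by simp only [ne_eq, Prod.mk.injEq, Fin.mk.injEq, not_and]; omega) (by simp only [ne_eq, Prod.mk.injEq, Fin.mk.injEq, not_and]; omega) hN
  rw [hrw]
  simp only [grid_deg]
  rw [pg_deg_1 (by omega), pg_deg_pen (by omega), pg_deg_0 (by omega), pg_deg_2 (by omega), pg_deg_m3 (by omega), pg_deg_last (by omega)]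
  norm_num [w1, w2]


theorem val_1_4 (hm : 5 ≤ m) (hn : 5 ≤ n) (i : Fin m) (j : Fin n) (hic : (i : Fin m).val = 1) (hjc : (j : Fin n).val = n - 1) :
    locf ((pathGraph m).boxProd (pathGraph n)) (i, j) = 75641/60060 := by
  obtain ⟨iv, hivlt⟩ := i
  obtain ⟨jv, hjvlt⟩ := j
  replace hic : iv = 1 := hic
  subst hic
  replace hjc : jv = n - 1 := hjc
  subst hjc
  have hN := grid_nbr_21 ⟨1, hivlt⟩ (⟨0, by omega⟩ : Fin m) (⟨2, by omega⟩ : Fin m) ⟨n - 1, hjvlt⟩ (⟨n - 2, by omega⟩ : Fin n)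
      (pg_nbr_1 (by omega) _ _ _) (pg_nbr_last (by omega) _ _)
  have hrw := locf_of_triple ((pathGraph m).boxProd (pathGraph n)) (⟨1, hivlt⟩, ⟨n - 1, hjvlt⟩) (⟨0, by omega⟩, ⟨n - 1, hjvlt⟩) (⟨2, by omega⟩, ⟨n - 1, hjvlt⟩) (⟨1, hivlt⟩, ⟨n - 2, by omega⟩)
      (by simp only [ne_eq, Prod.mk.injEq, Fin.mk.injEq, not_and]; omega) (by simp only [ne_eq, Prod.mk.injEq, Fin.mk.injEq, not_and]; omega) (by simp only [ne_eq, Prod.mk.injEq, Fin.mk.injEq, not_and]; omega) hN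
  rw [hrw]
  simp only [grid_deg]
  rw [pg_deg_1 (by omega), pg_deg_last (by omega), pg_deg_0 (by omega), pg_deg_2 (by omega), pg_deg_pen (by omega)]
  norm_num [w1, w2]


end TotalAux

namespace TotalAux
open Finset SimpleGraph
set_option linter.unusedVariables false
set_option maxHeartbeats 1000000
variable {m n : ℕ}

theorem val_2_0 (hm : 5 ≤ m) (hn : 5 ≤ n) (i : Fin m) (j : Fin n) (hic1 : 2 ≤ (i : Fin m).val) (hic2 : (i : Fin m).val + 2 < m) (hjc : (j : Fin n).val = 0) :
    locf ((pathGraph m).boxProd (pathGraph n)) (i, j) = 655/546 := by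
  obtain ⟨iv, hivlt⟩ := i
  obtain ⟨jv, hjvlt⟩ := j
  replace hic1 : 2 ≤ iv := hic1
  replace hic2 : iv + 2 < m := hic2
  replace hjc : jv = 0 := hjc
  subst hjc
  have hN := grid_nbr_21 ⟨iv, hivlt⟩ (⟨iv - 1, by omega⟩ : Fin m) (⟨iv + 1, by omega⟩ : Fin m) ⟨0, hjvlt⟩ (⟨1, by omega⟩ : Fin n)
      (pg_nbr_mid (by omega) (by omega) _ _ _) (pg_nbr_0 (by omega) _ _)
  have hrw := locf_of_triple ((pathGraph m).boxProd (pathGraph n)) (⟨iv, hivlt⟩, ⟨0, hjvlt⟩) (⟨iv - 1, by omega⟩, ⟨0, hjvlt⟩) (⟨iv + 1, by omega⟩, ⟨0, hjvlt⟩) (⟨iv, hivlt⟩, ⟨1, by omega⟩)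
      (by simp only [ne_eq, Prod.mk.injEq, Fin.mk.injEq, not_and]; omega) (by simp only [ne_eq, Prod.mk.injEq, Fin.mk.injEq, not_and]; omega) (by simp only [ne_eq, Prod.mk.injEq, Fin.mk.injEq, not_and]; omega) hN
  rw [hrw]
  simp only [grid_deg]
  rw [pg_deg_mid (k := iv) (by omega) (by omega), pg_deg_0 (by omega), pg_deg_mid (k := iv - 1) (by omega) (by omega), pg_deg_mid (k := iv + 1) (by omega) (by omega), pg_deg_1 (by omega)]
  norm_num [w1, w2]


theorem val_2_1 (hm : 5 ≤ m) (hn : 5 ≤ n) (i : Fin m) (j : Fin n) (hic1 : 2 ≤ (i : Fin m).val) (hic2 : (i : Fin m).val + 2 < m) (hjc : (j : Fin n).val = 1) :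
    locf ((pathGraph m).boxProd (pathGraph n)) (i, j) = 2591/1680 := by
  obtain ⟨iv, hivlt⟩ := i
  obtain ⟨jv, hjvlt⟩ := j
  replace hic1 : 2 ≤ iv := hic1
  replace hic2 : iv + 2 < m := hic2
  replace hjc : jv = 1 := hjc
  subst hjc
  have hN := grid_nbr_22 ⟨iv, hivlt⟩ (⟨iv - 1, by omega⟩ : Fin m) (⟨iv + 1, by omega⟩ : Fin m) ⟨1, hjvlt⟩ (⟨0, by omega⟩ : Fin n) (⟨2, by omega⟩ : Fin n)
      (pg_nbr_mid (by omega) (by omega) _ _ _) (pg_nbr_1 (by omega) _ _ _)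
  have hrw := locf_of_quad ((pathGraph m).boxProd (pathGraph n)) (⟨iv, hivlt⟩, ⟨1, hjvlt⟩) (⟨iv - 1, by omega⟩, ⟨1, hjvlt⟩) (⟨iv + 1, by omega⟩, ⟨1, hjvlt⟩) (⟨iv, hivlt⟩, ⟨0, by omega⟩) (⟨iv, hivlt⟩, ⟨2, by omega⟩)
      (by simp only [ne_eq, Prod.mk.injEq, Fin.mk.injEq, not_and]; omega) (by simp only [ne_eq, Prod.mk.injEq, Fin.mk.injEq, not_and]; omega) (by simp only [ne_eq, Prod.mk.injEq, Fin.mk.injEq, not_and]; omega) (by simp only [ne_eq, Prod.mk.injEq, Fin.mk.injEq, not_and]; omega) (by simp only [ne_eq, Prod.mk.injEq, Fin.mk.injEq, not_and]; omega) (by simp only [ne_eq, Prod.mk.injEq, Fin.mk.injEq, not_and]; omega) hN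
  rw [hrw]
  simp only [grid_deg]
  rw [pg_deg_mid (k := iv) (by omega) (by omega), pg_deg_1 (by omega), pg_deg_mid (k := iv - 1) (by omega) (by omega), pg_deg_mid (k := iv + 1) (by omega) (by omega), pg_deg_0 (by omega), pg_deg_2 (by omega)]
  norm_num [w1, w2]


theorem val_2_2 (hm : 5 ≤ m) (hn : 5 ≤ n) (i : Fin m) (j : Fin n) (hic1 : 2 ≤ (i : Fin m).val) (hic2 : (i : Fin m).val + 2 < m) (hjc1 : 2 ≤ (j : Fin n).val) (hjc2 : (j : Fin n).val + 2 < n) :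
    locf ((pathGraph m).boxProd (pathGraph n)) (i, j) = 3/2 := by
  obtain ⟨iv, hivlt⟩ := i
  obtain ⟨jv, hjvlt⟩ := j
  replace hic1 : 2 ≤ iv := hic1
  replace hic2 : iv + 2 < m := hic2
  replace hjc1 : 2 ≤ jv := hjc1
  replace hjc2 : jv + 2 < n := hjc2
  have hN := grid_nbr_22 ⟨iv, hivlt⟩ (⟨iv - 1, by omega⟩ : Fin m) (⟨iv + 1, by omega⟩ : Fin m) ⟨jv, hjvlt⟩ (⟨jv - 1, by omega⟩ : Fin n) (⟨jv + 1, by omega⟩ : Fin n)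
      (pg_nbr_mid (by omega) (by omega) _ _ _) (pg_nbr_mid (by omega) (by omega) _ _ _)
  have hrw := locf_of_quad ((pathGraph m).boxProd (pathGraph n)) (⟨iv, hivlt⟩, ⟨jv, hjvlt⟩) (⟨iv - 1, by omega⟩, ⟨jv, hjvlt⟩) (⟨iv + 1, by omega⟩, ⟨jv, hjvlt⟩) (⟨iv, hivlt⟩, ⟨jv - 1, by omega⟩) (⟨iv, hivlt⟩, ⟨jv + 1, by omega⟩)
      (by simp only [ne_eq, Prod.mk.injEq, Fin.mk.injEq, not_and]; omega) (by simp only [ne_eq, Prod.mk.injEq, Fin.mk.injEq, not_and]; omega) (by simp only [ne_eq, Prod.mk.injEq, Fin.mk.injEq, not_and]; omega) (by simp only [ne_eq, Prod.mk.injEq, Fin.mk.injEq, not_and]; omega) (by simp only [ne_eq, Prod.mk.injEq, Fin.mk.injEq, not_and]; omega) (by simp only [ne_eq, Prod.mk.injEq, Fin.mk.injEq, not_and]; omega) hN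
  rw [hrw]
  simp only [grid_deg]
  rw [pg_deg_mid (k := iv) (by omega) (by omega), pg_deg_mid (k := jv) (by omega) (by omega), pg_deg_mid (k := iv - 1) (by omega) (by omega), pg_deg_mid (k := iv + 1) (by omega) (by omega), pg_deg_mid (k := jv - 1) (by omega) (by omega), pg_deg_mid (k := jv + 1) (by omega) (by omega)]
  norm_num [w1, w2]


theorem val_2_3 (hm : 5 ≤ m) (hn : 5 ≤ n) (i : Fin m) (j : Fin n) (hic1 : 2 ≤ (i : Fin m).val) (hic2 : (i : Fin m).val + 2 < m) (hjc : (j : Fin n).val = n - 2) :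
    locf ((pathGraph m).boxProd (pathGraph n)) (i, j) = 2591/1680 := by
  obtain ⟨iv, hivlt⟩ := i
  obtain ⟨jv, hjvlt⟩ := j
  replace hic1 : 2 ≤ iv := hic1
  replace hic2 : iv + 2 < m := hic2
  replace hjc : jv = n - 2 := hjc
  subst hjc
  have hN := grid_nbr_22 ⟨iv, hivlt⟩ (⟨iv - 1, by omega⟩ : Fin m) (⟨iv + 1, by omega⟩ : Fin m) ⟨n - 2, hjvlt⟩ (⟨n - 3, by omega⟩ : Fin n) (⟨n - 1, by omega⟩ : Fin n)
      (pg_nbr_mid (by omega) (by omega) _ _ _) (pg_nbr_pen (by omega) _ _ _)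
  have hrw := locf_of_quad ((pathGraph m).boxProd (pathGraph n)) (⟨iv, hivlt⟩, ⟨n - 2, hjvlt⟩) (⟨iv - 1, by omega⟩, ⟨n - 2, hjvlt⟩) (⟨iv + 1, by omega⟩, ⟨n - 2, hjvlt⟩) (⟨iv, hivlt⟩, ⟨n - 3, by omega⟩) (⟨iv, hivlt⟩, ⟨n - 1, by omega⟩)
      (by simp only [ne_eq, Prod.mk.injEq, Fin.mk.injEq, not_and]; omega) (by simp only [ne_eq, Prod.mk.injEq, Fin.mk.injEq, not_and]; omega) (by simp only [ne_eq, Prod.mk.injEq, Fin.mk.injEq, not_and]; omega) (by simp only [ne_eq, Prod.mk.injEq, Fin.mk.injEq, not_and]; omega) (by simp only [ne_eq, Prod.mk.injEq, Fin.mk.injEq, not_and]; omega) (by simp only [ne_eq, Prod.mk.injEq, Fin.mk.injEq, not_and]; omega) hN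
  rw [hrw]
  simp only [grid_deg]
  rw [pg_deg_mid (k := iv) (by omega) (by omega), pg_deg_pen (by omega), pg_deg_mid (k := iv - 1) (by omega) (by omega), pg_deg_mid (k := iv + 1) (by omega) (by omega), pg_deg_m3 (by omega), pg_deg_last (by omega)]
  norm_num [w1, w2]


theorem val_2_4 (hm : 5 ≤ m) (hn : 5 ≤ n) (i : Fin m) (j : Fin n) (hic1 : 2 ≤ (i : Fin m).val) (hic2 : (i : Fin m).val + 2 < m) (hjc : (j : Fin n).val = n - 1) :
    locf ((pathGraph m).boxProd (pathGraph n)) (i, j) = 655/546 := by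
  obtain ⟨iv, hivlt⟩ := i
  obtain ⟨jv, hjvlt⟩ := j
  replace hic1 : 2 ≤ iv := hic1
  replace hic2 : iv + 2 < m := hic2
  replace hjc : jv = n - 1 := hjc
  subst hjc
  have hN := grid_nbr_21 ⟨iv, hivlt⟩ (⟨iv - 1, by omega⟩ : Fin m) (⟨iv + 1, by omega⟩ : Fin m) ⟨n - 1, hjvlt⟩ (⟨n - 2, by omega⟩ : Fin n)
      (pg_nbr_mid (by omega) (by omega) _ _ _) (pg_nbr_last (by omega) _ _)
  have hrw := locf_of_triple ((pathGraph m).boxProd (pathGraph n)) (⟨iv, hivlt⟩, ⟨n - 1, hjvlt⟩) (⟨iv - 1, by omega⟩, ⟨n - 1, hjvlt⟩) (⟨iv + 1, by omega⟩, ⟨n - 1, hjvlt⟩) (⟨iv, hivlt⟩, ⟨n - 2, by omega⟩)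
      (by simp only [ne_eq, Prod.mk.injEq, Fin.mk.injEq, not_and]; omega) (by simp only [ne_eq, Prod.mk.injEq, Fin.mk.injEq, not_and]; omega) (by simp only [ne_eq, Prod.mk.injEq, Fin.mk.injEq, not_and]; omega) hN
  rw [hrw]
  simp only [grid_deg]
  rw [pg_deg_mid (k := iv) (by omega) (by omega), pg_deg_last (by omega), pg_deg_mid (k := iv - 1) (by omega) (by omega), pg_deg_mid (k := iv + 1) (by omega) (by omega), pg_deg_pen (by omega)]
  norm_num [w1, w2]


end TotalAux

namespace TotalAux
open Finset SimpleGraph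
set_option linter.unusedVariables false
set_option maxHeartbeats 1000000
variable {m n : ℕ}

theorem val_3_0 (hm : 5 ≤ m) (hn : 5 ≤ n) (i : Fin m) (j : Fin n) (hic : (i : Fin m).val = m - 2) (hjc : (j : Fin n).val = 0) :
    locf ((pathGraph m).boxProd (pathGraph n)) (i, j) = 75641/60060 := by
  obtain ⟨iv, hivlt⟩ := i
  obtain ⟨jv, hjvlt⟩ := j
  replace hic : iv = m - 2 := hic
  subst hic
  replace hjc : jv = 0 := hjc
  subst hjc
  have hN := grid_nbr_21 ⟨m - 2, hivlt⟩ (⟨m - 3, by omega⟩ : Fin m) (⟨m - 1, by omega⟩ : Fin m) ⟨0, hjvlt⟩ (⟨1, by omega⟩ : Fin n)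
      (pg_nbr_pen (by omega) _ _ _) (pg_nbr_0 (by omega) _ _)
  have hrw := locf_of_triple ((pathGraph m).boxProd (pathGraph n)) (⟨m - 2, hivlt⟩, ⟨0, hjvlt⟩) (⟨m - 3, by omega⟩, ⟨0, hjvlt⟩) (⟨m - 1, by omega⟩, ⟨0, hjvlt⟩) (⟨m - 2, hivlt⟩, ⟨1, by omega⟩)
      (by simp only [ne_eq, Prod.mk.injEq, Fin.mk.injEq, not_and]; omega) (by simp only [ne_eq, Prod.mk.injEq, Fin.mk.injEq, not_and]; omega) (by simp only [ne_eq, Prod.mk.injEq, Fin.mk.injEq, not_and]; omega) hN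
  rw [hrw]
  simp only [grid_deg]
  rw [pg_deg_pen (by omega), pg_deg_0 (by omega), pg_deg_m3 (by omega), pg_deg_last (by omega), pg_deg_1 (by omega)]
  norm_num [w1, w2]


theorem val_3_1 (hm : 5 ≤ m) (hn : 5 ≤ n) (i : Fin m) (j : Fin n) (hic : (i : Fin m).val = m - 2) (hjc : (j : Fin n).val = 1) :
    locf ((pathGraph m).boxProd (pathGraph n)) (i, j) = 111/70 := by
  obtain ⟨iv, hivlt⟩ := i
  obtain ⟨jv, hjvlt⟩ := j
  replace hic : iv = m - 2 := hic
  subst hic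
  replace hjc : jv = 1 := hjc
  subst hjc
  have hN := grid_nbr_22 ⟨m - 2, hivlt⟩ (⟨m - 3, by omega⟩ : Fin m) (⟨m - 1, by omega⟩ : Fin m) ⟨1, hjvlt⟩ (⟨0, by omega⟩ : Fin n) (⟨2, by omega⟩ : Fin n)
      (pg_nbr_pen (by omega) _ _ _) (pg_nbr_1 (by omega) _ _ _)
  have hrw := locf_of_quad ((pathGraph m).boxProd (pathGraph n)) (⟨m - 2, hivlt⟩, ⟨1, hjvlt⟩) (⟨m - 3, by omega⟩, ⟨1, hjvlt⟩) (⟨m - 1, by omega⟩, ⟨1, hjvlt⟩) (⟨m - 2, hivlt⟩, ⟨0, by omega⟩) (⟨m - 2, hivlt⟩, ⟨2, by omega⟩)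
      (by simp only [ne_eq, Prod.mk.injEq, Fin.mk.injEq, not_and]; omega) (by simp only [ne_eq, Prod.mk.injEq, Fin.mk.injEq, not_and]; omega) (by simp only [ne_eq, Prod.mk.injEq, Fin.mk.injEq, not_and]; omega) (by simp only [ne_eq, Prod.mk.injEq, Fin.mk.injEq, not_and]; omega) (by simp only [ne_eq, Prod.mk.injEq, Fin.mk.injEq, not_and]; omega) (by simp only [ne_eq, Prod.mk.injEq, Fin.mk.injEq, not_and]; omega) hN
  rw [hrw]
  simp only [grid_deg]
  rw [pg_deg_pen (by omega), pg_deg_1 (by omega), pg_deg_m3 (by omega), pg_deg_last (by omega), pg_deg_0 (by omega), pg_deg_2 (by omega)]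
  norm_num [w1, w2]


theorem val_3_2 (hm : 5 ≤ m) (hn : 5 ≤ n) (i : Fin m) (j : Fin n) (hic : (i : Fin m).val = m - 2) (hjc1 : 2 ≤ (j : Fin n).val) (hjc2 : (j : Fin n).val + 2 < n) :
    locf ((pathGraph m).boxProd (pathGraph n)) (i, j) = 2591/1680 := by
  obtain ⟨iv, hivlt⟩ := i
  obtain ⟨jv, hjvlt⟩ := j
  replace hic : iv = m - 2 := hic
  subst hic
  replace hjc1 : 2 ≤ jv := hjc1
  replace hjc2 : jv + 2 < n := hjc2
  have hN := grid_nbr_22 ⟨m - 2, hivlt⟩ (⟨m - 3, by omega⟩ : Fin m) (⟨m - 1, by omega⟩ : Fin m) ⟨jv, hjvlt⟩ (⟨jv - 1, by omega⟩ : Fin n) (⟨jv + 1, by omega⟩ : Fin n)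
      (pg_nbr_pen (by omega) _ _ _) (pg_nbr_mid (by omega) (by omega) _ _ _)
  have hrw := locf_of_quad ((pathGraph m).boxProd (pathGraph n)) (⟨m - 2, hivlt⟩, ⟨jv, hjvlt⟩) (⟨m - 3, by omega⟩, ⟨jv, hjvlt⟩) (⟨m - 1, by omega⟩, ⟨jv, hjvlt⟩) (⟨m - 2, hivlt⟩, ⟨jv - 1, by omega⟩) (⟨m - 2, hivlt⟩, ⟨jv + 1, by omega⟩)
      (by simp only [ne_eq, Prod.mk.injEq, Fin.mk.injEq, not_and]; omega) (by simp only [ne_eq, Prod.mk.injEq, Fin.mk.injEq, not_and]; omega) (by simp only [ne_eq, Prod.mk.injEq, Fin.mk.injEq, not_and]; omega) (by simp only [ne_eq, Prod.mk.injEq, Fin.mk.injEq, not_and]; omega) (by simp only [ne_eq, Prod.mk.injEq, Fin.mk.injEq, not_and]; omega) (by simp only [ne_eq, Prod.mk.injEq, Fin.mk.injEq, not_and]; omega) hN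
  rw [hrw]
  simp only [grid_deg]
  rw [pg_deg_pen (by omega), pg_deg_mid (k := jv) (by omega) (by omega), pg_deg_m3 (by omega), pg_deg_last (by omega), pg_deg_mid (k := jv - 1) (by omega) (by omega), pg_deg_mid (k := jv + 1) (by omega) (by omega)]
  norm_num [w1, w2]


theorem val_3_3 (hm : 5 ≤ m) (hn : 5 ≤ n) (i : Fin m) (j : Fin n) (hic : (i : Fin m).val = m - 2) (hjc : (j : Fin n).val = n - 2) :
    locf ((pathGraph m).boxProd (pathGraph n)) (i, j) = 111/70 := by
  obtain ⟨iv, hivlt⟩ := i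
  obtain ⟨jv, hjvlt⟩ := j
  replace hic : iv = m - 2 := hic
  subst hic
  replace hjc : jv = n - 2 := hjc
  subst hjc
  have hN := grid_nbr_22 ⟨m - 2, hivlt⟩ (⟨m - 3, by omega⟩ : Fin m) (⟨m - 1, by omega⟩ : Fin m) ⟨n - 2, hjvlt⟩ (⟨n - 3, by omega⟩ : Fin n) (⟨n - 1, by omega⟩ : Fin n)
      (pg_nbr_pen (by omega) _ _ _) (pg_nbr_pen (by omega) _ _ _)
  have hrw := locf_of_quad ((pathGraph m).boxProd (pathGraph n)) (⟨m - 2, hivlt⟩, ⟨n - 2, hjvlt⟩) (⟨m - 3, by omega⟩, ⟨n - 2, hjvlt⟩) (⟨m - 1, by omega⟩, ⟨n - 2, hjvlt⟩) (⟨m - 2, hivlt⟩, ⟨n - 3, by omega⟩) (⟨m - 2, hivlt⟩, ⟨n - 1, by omega⟩)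
      (by simp only [ne_eq, Prod.mk.injEq, Fin.mk.injEq, not_and]; omega) (by simp only [ne_eq, Prod.mk.injEq, Fin.mk.injEq, not_and]; omega) (by simp only [ne_eq, Prod.mk.injEq, Fin.mk.injEq, not_and]; omega) (by simp only [ne_eq, Prod.mk.injEq, Fin.mk.injEq, not_and]; omega) (by simp only [ne_eq, Prod.mk.injEq, Fin.mk.injEq, not_and]; omega) (by simp only [ne_eq, Prod.mk.injEq, Fin.mk.injEq, not_and]; omega) hN
  rw [hrw]
  simp only [grid_deg]
  rw [pg_deg_pen (by omega), pg_deg_pen (by omega), pg_deg_m3 (by omega), pg_deg_last (by omega), pg_deg_m3 (by omega), pg_deg_last (by omega)]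
  norm_num [w1, w2]


theorem val_3_4 (hm : 5 ≤ m) (hn : 5 ≤ n) (i : Fin m) (j : Fin n) (hic : (i : Fin m).val = m - 2) (hjc : (j : Fin n).val = n - 1) :
    locf ((pathGraph m).boxProd (pathGraph n)) (i, j) = 75641/60060 := by
  obtain ⟨iv, hivlt⟩ := i
  obtain ⟨jv, hjvlt⟩ := j
  replace hic : iv = m - 2 := hic
  subst hic
  replace hjc : jv = n - 1 := hjc
  subst hjc
  have hN := grid_nbr_21 ⟨m - 2, hivlt⟩ (⟨m - 3, by omega⟩ : Fin m) (⟨m - 1, by omega⟩ : Fin m) ⟨n - 1, hjvlt⟩ (⟨n - 2, by omega⟩ : Fin n)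
      (pg_nbr_pen (by omega) _ _ _) (pg_nbr_last (by omega) _ _)
  have hrw := locf_of_triple ((pathGraph m).boxProd (pathGraph n)) (⟨m - 2, hivlt⟩, ⟨n - 1, hjvlt⟩) (⟨m - 3, by omega⟩, ⟨n - 1, hjvlt⟩) (⟨m - 1, by omega⟩, ⟨n - 1, hjvlt⟩) (⟨m - 2, hivlt⟩, ⟨n - 2, by omega⟩)
      (by simp only [ne_eq, Prod.mk.injEq, Fin.mk.injEq, not_and]; omega) (by simp only [ne_eq, Prod.mk.injEq, Fin.mk.injEq, not_and]; omega) (by simp only [ne_eq, Prod.mk.injEq, Fin.mk.injEq, not_and]; omega) hN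
  rw [hrw]
  simp only [grid_deg]
  rw [pg_deg_pen (by omega), pg_deg_last (by omega), pg_deg_m3 (by omega), pg_deg_last (by omega), pg_deg_pen (by omega)]
  norm_num [w1, w2]


end TotalAux

namespace TotalAux
open Finset SimpleGraph
set_option linter.unusedVariables false
set_option maxHeartbeats 1000000
variable {m n : ℕ}

theorem val_4_0 (hm : 5 ≤ m) (hn : 5 ≤ n) (i : Fin m) (j : Fin n) (hic : (i : Fin m).val = m - 1) (hjc : (j : Fin n).val = 0) :
    locf ((pathGraph m).boxProd (pathGraph n)) (i, j) = 38/45 := by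
  obtain ⟨iv, hivlt⟩ := i
  obtain ⟨jv, hjvlt⟩ := j
  replace hic : iv = m - 1 := hic
  subst hic
  replace hjc : jv = 0 := hjc
  subst hjc
  have hN := grid_nbr_11 ⟨m - 1, hivlt⟩ (⟨m - 2, by omega⟩ : Fin m) ⟨0, hjvlt⟩ (⟨1, by omega⟩ : Fin n)
      (pg_nbr_last (by omega) _ _) (pg_nbr_0 (by omega) _ _)
  have hrw := locf_of_pair ((pathGraph m).boxProd (pathGraph n)) (⟨m - 1, hivlt⟩, ⟨0, hjvlt⟩) (⟨m - 2, by omega⟩, ⟨0, hjvlt⟩) (⟨m - 1, hivlt⟩, ⟨1, by omega⟩)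
      (by simp only [ne_eq, Prod.mk.injEq, Fin.mk.injEq, not_and]; omega) hN
  rw [hrw]
  simp only [grid_deg]
  rw [pg_deg_last (by omega), pg_deg_0 (by omega), pg_deg_pen (by omega), pg_deg_1 (by omega)]
  norm_num [w1, w2]


theorem val_4_1 (hm : 5 ≤ m) (hn : 5 ≤ n) (i : Fin m) (j : Fin n) (hic : (i : Fin m).val = m - 1) (hjc : (j : Fin n).val = 1) :
    locf ((pathGraph m).boxProd (pathGraph n)) (i, j) = 75641/60060 := by
  obtain ⟨iv, hivlt⟩ := i
  obtain ⟨jv, hjvlt⟩ := j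
  replace hic : iv = m - 1 := hic
  subst hic
  replace hjc : jv = 1 := hjc
  subst hjc
  have hN := grid_nbr_12 ⟨m - 1, hivlt⟩ (⟨m - 2, by omega⟩ : Fin m) ⟨1, hjvlt⟩ (⟨0, by omega⟩ : Fin n) (⟨2, by omega⟩ : Fin n)
      (pg_nbr_last (by omega) _ _) (pg_nbr_1 (by omega) _ _ _)
  have hrw := locf_of_triple ((pathGraph m).boxProd (pathGraph n)) (⟨m - 1, hivlt⟩, ⟨1, hjvlt⟩) (⟨m - 2, by omega⟩, ⟨1, hjvlt⟩) (⟨m - 1, hivlt⟩, ⟨0, by omega⟩) (⟨m - 1, hivlt⟩, ⟨2, by omega⟩)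
      (by simp only [ne_eq, Prod.mk.injEq, Fin.mk.injEq, not_and]; omega) (by simp only [ne_eq, Prod.mk.injEq, Fin.mk.injEq, not_and]; omega) (by simp only [ne_eq, Prod.mk.injEq, Fin.mk.injEq, not_and]; omega) hN
  rw [hrw]
  simp only [grid_deg]
  rw [pg_deg_last (by omega), pg_deg_1 (by omega), pg_deg_pen (by omega), pg_deg_0 (by omega), pg_deg_2 (by omega)]
  norm_num [w1, w2]


theorem val_4_2 (hm : 5 ≤ m) (hn : 5 ≤ n) (i : Fin m) (j : Fin n) (hic : (i : Fin m).val = m - 1) (hjc1 : 2 ≤ (j : Fin n).val) (hjc2 : (j : Fin n).val + 2 < n) :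
    locf ((pathGraph m).boxProd (pathGraph n)) (i, j) = 655/546 := by
  obtain ⟨iv, hivlt⟩ := i
  obtain ⟨jv, hjvlt⟩ := j
  replace hic : iv = m - 1 := hic
  subst hic
  replace hjc1 : 2 ≤ jv := hjc1
  replace hjc2 : jv + 2 < n := hjc2
  have hN := grid_nbr_12 ⟨m - 1, hivlt⟩ (⟨m - 2, by omega⟩ : Fin m) ⟨jv, hjvlt⟩ (⟨jv - 1, by omega⟩ : Fin n) (⟨jv + 1, by omega⟩ : Fin n)
      (pg_nbr_last (by omega) _ _) (pg_nbr_mid (by omega) (by omega) _ _ _)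
  have hrw := locf_of_triple ((pathGraph m).boxProd (pathGraph n)) (⟨m - 1, hivlt⟩, ⟨jv, hjvlt⟩) (⟨m - 2, by omega⟩, ⟨jv, hjvlt⟩) (⟨m - 1, hivlt⟩, ⟨jv - 1, by omega⟩) (⟨m - 1, hivlt⟩, ⟨jv + 1, by omega⟩)
      (by simp only [ne_eq, Prod.mk.injEq, Fin.mk.injEq, not_and]; omega) (by simp only [ne_eq, Prod.mk.injEq, Fin.mk.injEq, not_and]; omega) (by simp only [ne_eq, Prod.mk.injEq, Fin.mk.injEq, not_and]; omega) hN
  rw [hrw]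
  simp only [grid_deg]
  rw [pg_deg_last (by omega), pg_deg_mid (k := jv) (by omega) (by omega), pg_deg_pen (by omega), pg_deg_mid (k := jv - 1) (by omega) (by omega), pg_deg_mid (k := jv + 1) (by omega) (by omega)]
  norm_num [w1, w2]


theorem val_4_3 (hm : 5 ≤ m) (hn : 5 ≤ n) (i : Fin m) (j : Fin n) (hic : (i : Fin m).val = m - 1) (hjc : (j : Fin n).val = n - 2) :
    locf ((pathGraph m).boxProd (pathGraph n)) (i, j) = 75641/60060 := by
  obtain ⟨iv, hivlt⟩ := i
  obtain ⟨jv, hjvlt⟩ := j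
  replace hic : iv = m - 1 := hic
  subst hic
  replace hjc : jv = n - 2 := hjc
  subst hjc
  have hN := grid_nbr_12 ⟨m - 1, hivlt⟩ (⟨m - 2, by omega⟩ : Fin m) ⟨n - 2, hjvlt⟩ (⟨n - 3, by omega⟩ : Fin n) (⟨n - 1, by omega⟩ : Fin n)
      (pg_nbr_last (by omega) _ _) (pg_nbr_pen (by omega) _ _ _)
  have hrw := locf_of_triple ((pathGraph m).boxProd (pathGraph n)) (⟨m - 1, hivlt⟩, ⟨n - 2, hjvlt⟩) (⟨m - 2, by omega⟩, ⟨n - 2, hjvlt⟩) (⟨m - 1, hivlt⟩, ⟨n - 3, by omega⟩) (⟨m - 1, hivlt⟩, ⟨n - 1, by omega⟩)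
      (by simp only [ne_eq, Prod.mk.injEq, Fin.mk.injEq, not_and]; omega) (by simp only [ne_eq, Prod.mk.injEq, Fin.mk.injEq, not_and]; omega) (by simp only [ne_eq, Prod.mk.injEq, Fin.mk.injEq, not_and]; omega) hN
  rw [hrw]
  simp only [grid_deg]
  rw [pg_deg_last (by omega), pg_deg_pen (by omega), pg_deg_pen (by omega), pg_deg_m3 (by omega), pg_deg_last (by omega)]
  norm_num [w1, w2]


theorem val_4_4 (hm : 5 ≤ m) (hn : 5 ≤ n) (i : Fin m) (j : Fin n) (hic : (i : Fin m).val = m - 1) (hjc : (j : Fin n).val = n - 1) :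
    locf ((pathGraph m).boxProd (pathGraph n)) (i, j) = 38/45 := by
  obtain ⟨iv, hivlt⟩ := i
  obtain ⟨jv, hjvlt⟩ := j
  replace hic : iv = m - 1 := hic
  subst hic
  replace hjc : jv = n - 1 := hjc
  subst hjc
  have hN := grid_nbr_11 ⟨m - 1, hivlt⟩ (⟨m - 2, by omega⟩ : Fin m) ⟨n - 1, hjvlt⟩ (⟨n - 2, by omega⟩ : Fin n)
      (pg_nbr_last (by omega) _ _) (pg_nbr_last (by omega) _ _)
  have hrw := locf_of_pair ((pathGraph m).boxProd (pathGraph n)) (⟨m - 1, hivlt⟩, ⟨n - 1, hjvlt⟩) (⟨m - 2, by omega⟩, ⟨n - 1, hjvlt⟩) (⟨m - 1, hivlt⟩, ⟨n - 2, by omega⟩)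
      (by simp only [ne_eq, Prod.mk.injEq, Fin.mk.injEq, not_and]; omega) hN
  rw [hrw]
  simp only [grid_deg]
  rw [pg_deg_last (by omega), pg_deg_last (by omega), pg_deg_pen (by omega), pg_deg_pen (by omega)]
  norm_num [w1, w2]



end TotalAux

namespace TotalAux
open Finset SimpleGraph
set_option linter.unusedVariables false
set_option maxHeartbeats 1000000

theorem sum_fin_five (N : ℕ) (a : ℕ) (hN : N = a + 5) (f : Fin N → ℝ) (c0 c1 cm c3 c4 : ℝ)
    (h0 : ∀ (h : (0:ℕ) < N), f ⟨0, h⟩ = c0)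
    (h1 : ∀ (h : (1:ℕ) < N), f ⟨1, h⟩ = c1)
    (hmid : ∀ k (hk : k < N), 2 ≤ k → k + 2 < N → f ⟨k, hk⟩ = cm)
    (h3 : ∀ (h : N - 2 < N), f ⟨N - 2, h⟩ = c3)
    (h4 : ∀ (h : N - 1 < N), f ⟨N - 1, h⟩ = c4) :
    ∑ i : Fin N, f i = c0 + c1 + ((N : ℝ) - 4) * cm + c3 + c4 := by
  subst hN
  have e3 : f ⟨a + 3, by omega⟩ = c3 := h3 (by omega)
  have e4 : f ⟨a + 4, by omega⟩ = c4 := h4 (by omega)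
  set g : ℕ → ℝ := fun k => if h : k < a + 5 then f ⟨k, h⟩ else 0 with hg
  have hsum : ∑ i : Fin (a + 5), f i = ∑ k ∈ Finset.range (a + 5), g k := by
    rw [← Fin.sum_univ_eq_sum_range g]
    refine Finset.sum_congr rfl fun i _ => ?_
    simp [hg, i.isLt]
  rw [hsum, Finset.sum_range_succ, Finset.sum_range_succ, Finset.sum_range_succ',
    Finset.sum_range_succ']
  have hg0 : g 0 = c0 := by rw [hg]; simp only [dif_pos (by omega : (0:ℕ) < a + 5)]; exact h0 _
  have hg1 : g (0 + 1) = c1 := by rw [hg]; simp only [dif_pos (by omega : (0+1:ℕ) < a + 5)]; exact h1 _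
  have hg3 : g (a + 3) = c3 := by
    rw [hg]; simp only [dif_pos (by omega : a + 3 < a + 5)]; exact e3
  have hg4 : g (a + 4) = c4 := by
    rw [hg]; simp only [dif_pos (by omega : a + 4 < a + 5)]; exact e4
  have hmid' : ∑ k ∈ Finset.range (a + 1), g (k + 1 + 1) = (a + 1 : ℝ) * cm := by
    have hc : ∀ k ∈ Finset.range (a + 1), g (k + 1 + 1) = cm := by
      intro k hk
      have hkr := Finset.mem_range.mp hk
      rw [hg]
      simp only [dif_pos (show k + 1 + 1 < a + 5 by omega)]
      exact hmid _ _ (by omega) (by omega)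
    rw [Finset.sum_congr rfl hc, Finset.sum_const, Finset.card_range, nsmul_eq_mul]
    push_cast; ring
  rw [hg0, hg1, hg3, hg4, hmid']
  push_cast
  ring

variable {m n : ℕ}

theorem degsq_row (hn : 5 ≤ n) (i : Fin m) (di : ℝ)
    (hdi : ((pathGraph m).degree i : ℝ) = di) :
    ∑ j : Fin n, ((((pathGraph m).boxProd (pathGraph n)).degree (i, j) : ℝ)) ^ 2
      = (di + 1) ^ 2 + (di + 2) ^ 2 + ((n : ℝ) - 4) * (di + 2) ^ 2
        + (di + 2) ^ 2 + (di + 1) ^ 2 := by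
  rw [sum_fin_five n (n - 5) (by omega)
    (fun j => ((((pathGraph m).boxProd (pathGraph n)).degree (i, j) : ℝ)) ^ 2)
    ((di + 1) ^ 2) ((di + 2) ^ 2) ((di + 2) ^ 2) ((di + 2) ^ 2) ((di + 1) ^ 2)
    (fun h => by simp only [grid_deg]; push_cast; rw [hdi, pg_deg_0 (by omega)]; norm_num)
    (fun h => by simp only [grid_deg]; push_cast; rw [hdi, pg_deg_1 (by omega)]; norm_num)
    (fun k hk a b => by
      simp only [grid_deg]; push_cast
      rw [hdi, pg_deg_mid (k := k) (by omega) (by omega)]; norm_num)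
    (fun h => by simp only [grid_deg]; push_cast; rw [hdi, pg_deg_pen (by omega)]; norm_num)
    (fun h => by simp only [grid_deg]; push_cast; rw [hdi, pg_deg_last (by omega)]; norm_num)]

theorem degsq_total (hm : 5 ≤ m) (hn : 5 ≤ n) :
    ∑ v : Fin m × Fin n, ((((pathGraph m).boxProd (pathGraph n)).degree v : ℝ)) ^ 2
      = 16 * (m : ℝ) * (n : ℝ) - 14 * ((m : ℝ) + (n : ℝ)) + 8 := by
  rw [Fintype.sum_prod_type]
  rw [sum_fin_five m (m - 5) (by omega)
    (fun i => ∑ j : Fin n, ((((pathGraph m).boxProd (pathGraph n)).degree (i, j) : ℝ)) ^ 2)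
    (((1:ℝ) + 1) ^ 2 + ((1:ℝ) + 2) ^ 2 + ((n : ℝ) - 4) * ((1:ℝ) + 2) ^ 2
        + ((1:ℝ) + 2) ^ 2 + ((1:ℝ) + 1) ^ 2)
    (((2:ℝ) + 1) ^ 2 + ((2:ℝ) + 2) ^ 2 + ((n : ℝ) - 4) * ((2:ℝ) + 2) ^ 2
        + ((2:ℝ) + 2) ^ 2 + ((2:ℝ) + 1) ^ 2)
    (((2:ℝ) + 1) ^ 2 + ((2:ℝ) + 2) ^ 2 + ((n : ℝ) - 4) * ((2:ℝ) + 2) ^ 2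
        + ((2:ℝ) + 2) ^ 2 + ((2:ℝ) + 1) ^ 2)
    (((2:ℝ) + 1) ^ 2 + ((2:ℝ) + 2) ^ 2 + ((n : ℝ) - 4) * ((2:ℝ) + 2) ^ 2
        + ((2:ℝ) + 2) ^ 2 + ((2:ℝ) + 1) ^ 2)
    (((1:ℝ) + 1) ^ 2 + ((1:ℝ) + 2) ^ 2 + ((n : ℝ) - 4) * ((1:ℝ) + 2) ^ 2
        + ((1:ℝ) + 2) ^ 2 + ((1:ℝ) + 1) ^ 2)
    (fun h => degsq_row hn _ 1 (by rw [pg_deg_0 (by omega)]; norm_num))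
    (fun h => degsq_row hn _ 2 (by rw [pg_deg_1 (by omega)]; norm_num))
    (fun k hk a b => degsq_row hn _ 2
      (by rw [pg_deg_mid (k := k) (by omega) (by omega)]; norm_num))
    (fun h => degsq_row hn _ 2 (by rw [pg_deg_pen (by omega)]; norm_num))
    (fun h => degsq_row hn _ 1 (by rw [pg_deg_last (by omega)]; norm_num))]
  ring


theorem locf_row_0 (hm : 5 ≤ m) (hn : 5 ≤ n) (i : Fin m) (hic : i.val = 0) :
    ∑ j : Fin n, locf ((pathGraph m).boxProd (pathGraph n)) (i, j) = (38/45) + (75641/60060) + ((n : ℝ) - 4) * (655/546) + (75641/60060) + (38/45) := by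
  rw [sum_fin_five n (n - 5) (by omega) (fun j => locf ((pathGraph m).boxProd (pathGraph n)) (i, j))
    (38/45) (75641/60060) (655/546) (75641/60060) (38/45)
    (fun h => val_0_0 hm hn i ⟨0, h⟩ hic rfl)
    (fun h => val_0_1 hm hn i ⟨1, h⟩ hic rfl)
    (fun k hk a b => val_0_2 hm hn i ⟨k, hk⟩ hic a b)
    (fun h => val_0_3 hm hn i ⟨n - 2, h⟩ hic rfl)
    (fun h => val_0_4 hm hn i ⟨n - 1, h⟩ hic rfl)]

theorem locf_row_1 (hm : 5 ≤ m) (hn : 5 ≤ n) (i : Fin m) (hic : i.val = 1) :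
    ∑ j : Fin n, locf ((pathGraph m).boxProd (pathGraph n)) (i, j) = (75641/60060) + (111/70) + ((n : ℝ) - 4) * (2591/1680) + (111/70) + (75641/60060) := by
  rw [sum_fin_five n (n - 5) (by omega) (fun j => locf ((pathGraph m).boxProd (pathGraph n)) (i, j))
    (75641/60060) (111/70) (2591/1680) (111/70) (75641/60060)
    (fun h => val_1_0 hm hn i ⟨0, h⟩ hic rfl)
    (fun h => val_1_1 hm hn i ⟨1, h⟩ hic rfl)
    (fun k hk a b => val_1_2 hm hn i ⟨k, hk⟩ hic a b)
    (fun h => val_1_3 hm hn i ⟨n - 2, h⟩ hic rfl)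
    (fun h => val_1_4 hm hn i ⟨n - 1, h⟩ hic rfl)]

theorem locf_row_2 (hm : 5 ≤ m) (hn : 5 ≤ n) (i : Fin m) (hic1 : 2 ≤ i.val) (hic2 : i.val + 2 < m) :
    ∑ j : Fin n, locf ((pathGraph m).boxProd (pathGraph n)) (i, j) = (655/546) + (2591/1680) + ((n : ℝ) - 4) * (3/2) + (2591/1680) + (655/546) := by
  rw [sum_fin_five n (n - 5) (by omega) (fun j => locf ((pathGraph m).boxProd (pathGraph n)) (i, j))
    (655/546) (2591/1680) (3/2) (2591/1680) (655/546)
    (fun h => val_2_0 hm hn i ⟨0, h⟩ hic1 hic2 rfl)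
    (fun h => val_2_1 hm hn i ⟨1, h⟩ hic1 hic2 rfl)
    (fun k hk a b => val_2_2 hm hn i ⟨k, hk⟩ hic1 hic2 a b)
    (fun h => val_2_3 hm hn i ⟨n - 2, h⟩ hic1 hic2 rfl)
    (fun h => val_2_4 hm hn i ⟨n - 1, h⟩ hic1 hic2 rfl)]

theorem locf_row_3 (hm : 5 ≤ m) (hn : 5 ≤ n) (i : Fin m) (hic : i.val = m - 2) :
    ∑ j : Fin n, locf ((pathGraph m).boxProd (pathGraph n)) (i, j) = (75641/60060) + (111/70) + ((n : ℝ) - 4) * (2591/1680) + (111/70) + (75641/60060) := by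
  rw [sum_fin_five n (n - 5) (by omega) (fun j => locf ((pathGraph m).boxProd (pathGraph n)) (i, j))
    (75641/60060) (111/70) (2591/1680) (111/70) (75641/60060)
    (fun h => val_3_0 hm hn i ⟨0, h⟩ hic rfl)
    (fun h => val_3_1 hm hn i ⟨1, h⟩ hic rfl)
    (fun k hk a b => val_3_2 hm hn i ⟨k, hk⟩ hic a b)
    (fun h => val_3_3 hm hn i ⟨n - 2, h⟩ hic rfl)
    (fun h => val_3_4 hm hn i ⟨n - 1, h⟩ hic rfl)]

theorem locf_row_4 (hm : 5 ≤ m) (hn : 5 ≤ n) (i : Fin m) (hic : i.val = m - 1) :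
    ∑ j : Fin n, locf ((pathGraph m).boxProd (pathGraph n)) (i, j) = (38/45) + (75641/60060) + ((n : ℝ) - 4) * (655/546) + (75641/60060) + (38/45) := by
  rw [sum_fin_five n (n - 5) (by omega) (fun j => locf ((pathGraph m).boxProd (pathGraph n)) (i, j))
    (38/45) (75641/60060) (655/546) (75641/60060) (38/45)
    (fun h => val_4_0 hm hn i ⟨0, h⟩ hic rfl)
    (fun h => val_4_1 hm hn i ⟨1, h⟩ hic rfl)
    (fun k hk a b => val_4_2 hm hn i ⟨k, hk⟩ hic a b)
    (fun h => val_4_3 hm hn i ⟨n - 2, h⟩ hic rfl)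
    (fun h => val_4_4 hm hn i ⟨n - 1, h⟩ hic rfl)]

theorem locf_total (hm : 5 ≤ m) (hn : 5 ≤ n) :
    ∑ v : Fin m × Fin n, locf ((pathGraph m).boxProd (pathGraph n)) v
      = (3 / 2) * (m : ℝ) * (n : ℝ) - (1879 / 3640) * ((m : ℝ) + (n : ℝ))
        - 3347 / 45045 := by
  rw [Fintype.sum_prod_type]
  rw [sum_fin_five m (m - 5) (by omega) (fun i => ∑ j : Fin n, locf ((pathGraph m).boxProd (pathGraph n)) (i, j))
    ((38/45) + (75641/60060) + ((n : ℝ) - 4) * (655/546) + (75641/60060) + (38/45)) ((75641/60060) + (111/70) + ((n : ℝ) - 4) * (2591/1680) + (111/70) + (75641/60060)) ((655/546) + (2591/1680) + ((n : ℝ) - 4) * (3/2) + (2591/1680) + (655/546)) ((75641/60060) + (111/70) + ((n : ℝ) - 4) * (2591/1680) + (111/70) + (75641/60060)) ((38/45) + (75641/60060) + ((n : ℝ) - 4) * (655/546) + (75641/60060) + (38/45))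
    (fun h => locf_row_0 hm hn ⟨0, h⟩ rfl)
    (fun h => locf_row_1 hm hn ⟨1, h⟩ rfl)
    (fun k hk a b => locf_row_2 hm hn ⟨k, hk⟩ a b)
    (fun h => locf_row_3 hm hn ⟨m - 2, h⟩ rfl)
    (fun h => locf_row_4 hm hn ⟨m - 1, h⟩ rfl)]
  ring


end TotalAux

/-- For the `m × n` grid graph `G_{m,n} = P_m □ P_n` with `m, n ≥ 5`,
`H(T(G_{m,n})) = M₁(G_{m,n})/16 + mn/2 + (653/1820)(m + n) - 51739/90090`; equivalently,
`H(T(G_{m,n})) = (3/2)mn - (1879/3640)(m + n) - 3347/45045`. -/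
theorem harmonicIndex_totalGraph_gridGraph (m n : ℕ) (hm : 5 ≤ m) (hn : 5 ≤ n) :
    ((SimpleGraph.pathGraph m).boxProd
        (SimpleGraph.pathGraph n)).totalGraph.harmonicIndex
      = (∑ v : Fin m × Fin n,
          (((SimpleGraph.pathGraph m).boxProd (SimpleGraph.pathGraph n)).degree v : ℝ) ^ 2)
            / 16
        + (m : ℝ) * (n : ℝ) / 2 + (653 / 1820) * ((m : ℝ) + (n : ℝ)) - 51739 / 90090 ∧
    ((SimpleGraph.pathGraph m).boxProd
        (SimpleGraph.pathGraph n)).totalGraph.harmonicIndex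
      = (3 / 2) * (m : ℝ) * (n : ℝ) - (1879 / 3640) * ((m : ℝ) + (n : ℝ))
        - 3347 / 45045 := by
  have hH := TotalAux.harmonic_total ((SimpleGraph.pathGraph m).boxProd (SimpleGraph.pathGraph n))
  have hL := TotalAux.locf_total (m := m) (n := n) hm hn
  have hM := TotalAux.degsq_total (m := m) (n := n) hm hn
  constructor
  · rw [hH, hL, hM]; ring
  · rw [hH, hL]
end

section
/- Let T_l be the complete binary tree of level l ≥ 3 (a rooted binary tree in which the root has degree 2, every internal non-root vertex has degree 3, and all 2^l leaves are at distance l from the root, so T_l has 2^{l+1} − 1 vertices). Then the harmonic index of its total graph satisfies H(T(T_l)) = (223/120)·2^l − 758/495. -/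
open scoped Classical

/-- The complete binary tree of level `l`: vertices are heap-indexed `1, …, 2^(l+1) - 1`
(here realized as `Fin (2^(l+1) - 1)` via `i ↦ i + 1`), and vertex `i` is adjacent to its
children `2i` and `2i + 1`.  The root (index `1`) has degree 2, every internal non-root
vertex has degree 3, and the `2^l` leaves are at distance `l` from the root. -/
def completeBinaryTree (l : ℕ) : SimpleGraph (Fin (2 ^ (l + 1) - 1)) where
  Adj x y := (x.val + 1) = (y.val + 1) / 2 ∨ (y.val + 1) = (x.val + 1) / 2
  symm := ⟨fun x y h => h.symm⟩
  loopless := ⟨fun x h => by rcases h with h | h <;> omega⟩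


open Finset

section DegreeLemmas


namespace SimpleGraph
variable {V : Type*} [Fintype V] (G : SimpleGraph V)

lemma card_edge_subtype (w : V) :
    Fintype.card {e : G.edgeSet // w ∈ (e : Sym2 V)} = G.degree w := by
  rw [← card_incidenceSet_eq_degree]
  exact Fintype.card_congr
    ⟨fun e => ⟨e.1.1, e.1.2, e.2⟩, fun f => ⟨⟨f.1, f.2.1⟩, f.2.2⟩,
      fun e => rfl, fun f => rfl⟩

lemma totalGraph_degree_split (x : V ⊕ G.edgeSet) :
    G.totalGraph.degree x
      = Fintype.card {a : V // G.totalGraph.Adj x (Sum.inl a)}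
        + Fintype.card {e : G.edgeSet // G.totalGraph.Adj x (Sum.inr e)} := by
  rw [← card_neighborSet_eq_degree,
    Fintype.card_congr ((Equiv.subtypeEquivRight
      (fun y => G.totalGraph.mem_neighborSet x y)).trans Equiv.subtypeSum),
    Fintype.card_sum]

lemma totalGraph_degree_inl (v : V) :
    G.totalGraph.degree (Sum.inl v) = 2 * G.degree v := by
  rw [totalGraph_degree_split]
  have h1 : Fintype.card {a : V // G.totalGraph.Adj (Sum.inl v) (Sum.inl a)} = G.degree v := by
    rw [← card_neighborSet_eq_degree]
    exact Fintype.card_congr (Equiv.subtypeEquivRight fun a => Iff.rfl)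
  have h2 : Fintype.card {e : G.edgeSet // G.totalGraph.Adj (Sum.inl v) (Sum.inr e)}
      = G.degree v := by
    rw [← card_edge_subtype G v]
    exact Fintype.card_congr (Equiv.subtypeEquivRight fun e => Iff.rfl)
  rw [h1, h2]; ring

lemma totalGraph_degree_inr (u v : V) (h : G.Adj u v) :
    G.totalGraph.degree (Sum.inr (⟨s(u,v), h⟩ : G.edgeSet)) = G.degree u + G.degree v := by
  rw [totalGraph_degree_split]
  set e : G.edgeSet := ⟨s(u,v), h⟩ with he
  have h1 : Fintype.card {a : V // G.totalGraph.Adj (Sum.inr e) (Sum.inl a)} = 2 := by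
    have : Fintype.card {a : V // G.totalGraph.Adj (Sum.inr e) (Sum.inl a)}
        = #({u, v} : Finset V) := by
      rw [Fintype.card_subtype]
      congr 1
      ext a
      simp only [mem_filter, mem_univ, true_and, mem_insert, mem_singleton]
      show a ∈ (e : Sym2 V) ↔ _
      rw [he]
      simp [Sym2.mem_iff]
    rw [this, card_insert_of_notMem (by simp [h.ne]), card_singleton]
  have h2 : Fintype.card {f : G.edgeSet // G.totalGraph.Adj (Sum.inr e) (Sum.inr f)}
      = G.degree u + G.degree v - 2 := by
    rw [Fintype.card_subtype]
    have hset : (univ.filter (fun f : G.edgeSet => G.totalGraph.Adj (Sum.inr e) (Sum.inr f)))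
        = (((univ.filter (fun f : G.edgeSet => u ∈ (f : Sym2 V))) ∪ (univ.filter (fun f : G.edgeSet => v ∈ (f : Sym2 V)))).erase e) := by
      ext f
      simp only [mem_filter, mem_univ, true_and, mem_erase, mem_union]
      show (e ≠ f ∧ ∃ w, w ∈ (e : Sym2 V) ∧ w ∈ (f : Sym2 V)) ↔ _
      constructor
      · rintro ⟨hne, w, hw1, hw2⟩
        refine ⟨fun hfe => hne hfe.symm, ?_⟩
        rw [he] at hw1
        simp only [Sym2.mem_iff] at hw1
        rcases hw1 with rfl | rfl
        · left; exact hw2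
        · right; exact hw2
      · rintro ⟨hne, hmem⟩
        refine ⟨fun hef => hne hef.symm, ?_⟩
        rcases hmem with hm | hm
        · exact ⟨u, by simp [he], hm⟩
        · exact ⟨v, by simp [he], hm⟩
    rw [hset]
    have hemem : e ∈ ((univ.filter (fun f : G.edgeSet => u ∈ (f : Sym2 V))) ∪ (univ.filter (fun f : G.edgeSet => v ∈ (f : Sym2 V)))) := by
      simp only [mem_union, mem_filter, mem_univ, true_and]
      left; simp [he]
    rw [card_erase_of_mem hemem]
    have hu : #((univ.filter (fun f : G.edgeSet => u ∈ (f : Sym2 V))) : Finset G.edgeSet) = G.degree u := by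
      rw [← card_edge_subtype G u, Fintype.card_subtype]
    have hv : #((univ.filter (fun f : G.edgeSet => v ∈ (f : Sym2 V))) : Finset G.edgeSet) = G.degree v := by
      rw [← card_edge_subtype G v, Fintype.card_subtype]
    have hinter : ((univ.filter (fun f : G.edgeSet => u ∈ (f : Sym2 V))) ∩ (univ.filter (fun f : G.edgeSet => v ∈ (f : Sym2 V)))
        : Finset G.edgeSet) = {e} := by
      ext f
      simp only [mem_inter, mem_filter, mem_univ, true_and, mem_singleton]
      rw [Sym2.mem_and_mem_iff h.ne]
      constructor
      · intro hf; exact Subtype.ext hf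
      · rintro rfl; rfl
    have := card_union_add_card_inter ((univ.filter (fun f : G.edgeSet => u ∈ (f : Sym2 V))) : Finset G.edgeSet)
      ((univ.filter (fun f : G.edgeSet => v ∈ (f : Sym2 V))))
    rw [hinter, hu, hv, card_singleton] at this
    omega
  rw [h1, h2]
  have hu : 1 ≤ G.degree u := by
    rw [← card_neighborFinset_eq_degree]
    exact card_pos.2 ⟨v, by simp [h]⟩
  have hv : 1 ≤ G.degree v := by
    rw [← card_neighborFinset_eq_degree]
    exact card_pos.2 ⟨u, by simp [h.symm]⟩
  omega

end SimpleGraph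


namespace CBT

variable {l : ℕ}

abbrev Nn (l : ℕ) : ℕ := 2 ^ (l + 1) - 1

lemma Nn_pos (l : ℕ) : 0 < Nn l := by
  show 0 < 2 ^ (l+1) - 1
  have : 1 < 2 ^ (l+1) := Nat.one_lt_two_pow_iff.mpr (by omega)
  omega

lemma Nn_eq (l : ℕ) : Nn l = 2 * 2 ^ l - 1 := by
  simp [Nn, pow_succ]; ring_nf

lemma pow_ge (hl : 3 ≤ l) : 8 ≤ 2 ^ l := by
  calc (8:ℕ) = 2 ^ 3 := rfl
  _ ≤ 2 ^ l := Nat.pow_le_pow_right (by norm_num) hl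

def vtx (l : ℕ) (m : ℕ) : Fin (Nn l) := ⟨(m - 1) % (Nn l), Nat.mod_lt _ (Nn_pos l)⟩

lemma vtx_val (m : ℕ) (h1 : 1 ≤ m) (h2 : m ≤ Nn l) : (vtx l m).val = m - 1 := by
  simp only [vtx]
  exact Nat.mod_eq_of_lt (by omega)

lemma adj_iff (i j : Fin (Nn l)) :
    (completeBinaryTree l).Adj i j ↔
      ((i.val + 1) = (j.val + 1) / 2 ∨ (j.val + 1) = (i.val + 1) / 2) := Iff.rfl

lemma hadj (m : ℕ) (h1 : 2 ≤ m) (h2 : m ≤ Nn l) :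
    (completeBinaryTree l).Adj (vtx l m) (vtx l (m / 2)) := by
  rw [adj_iff, vtx_val m (by omega) h2, vtx_val (m/2) (by omega) (by omega)]
  right; omega

def eps (l : ℕ) (hl : 3 ≤ l) (m : ℕ) : (completeBinaryTree l).edgeSet :=
  if h : 2 ≤ m ∧ m ≤ Nn l then ⟨s(vtx l m, vtx l (m / 2)), hadj m h.1 h.2⟩
  else ⟨s(vtx l 2, vtx l 1), by
    have h8 := pow_ge hl
    have := Nn_eq l
    have : (2:ℕ)/2 = 1 := rfl
    have h2 : (2:ℕ) ≤ Nn l := by omega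
    have := hadj (l := l) 2 le_rfl h2
    simpa using this⟩

lemma eps_eq (hl : 3 ≤ l) (m : ℕ) (h1 : 2 ≤ m) (h2 : m ≤ Nn l) :
    eps l hl m = ⟨s(vtx l m, vtx l (m / 2)), hadj m h1 h2⟩ := dif_pos ⟨h1, h2⟩

end CBT

namespace CBT

lemma fin_filter_card {N : ℕ} (p : Fin N → Prop) (Q : ℕ → Prop)
    (hQ : ∀ m (hm : m < N), (p ⟨m, hm⟩ ↔ Q m)) :
    #(Finset.univ.filter p) = #((Finset.range N).filter Q) := by
  apply Finset.card_bij (fun a _ => a.val)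
  · intro a ha
    simp only [mem_filter, mem_univ, true_and] at ha ⊢
    simp only [mem_range]
    exact ⟨a.isLt, (hQ a.val a.isLt).mp (by simpa using ha)⟩
  · intro a _ b _ h
    exact Fin.ext h
  · intro b hb
    simp only [mem_filter, mem_range] at hb
    exact ⟨⟨b, hb.1⟩, by simp only [mem_filter, mem_univ, true_and]; exact (hQ b hb.1).mpr hb.2, rfl⟩

lemma degree_eq {l : ℕ} (i : Fin (Nn l)) :
    (completeBinaryTree l).degree i
      = #((Finset.range (Nn l)).filter
          (fun m => (i.val + 1) = (m + 1) / 2 ∨ (m + 1) = (i.val + 1) / 2)) := by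
  rw [← SimpleGraph.card_neighborFinset_eq_degree, SimpleGraph.neighborFinset_eq_filter]
  convert fin_filter_card ((completeBinaryTree l).Adj i) (fun m => (i.val + 1) = (m + 1) / 2 ∨ (m + 1) = (i.val + 1) / 2)
    (fun m hm => Iff.rfl) using 2
  ext m
  simp [Finset.mem_filter, Nn]

lemma tree_degree {l : ℕ} (hl : 3 ≤ l) (i : Fin (Nn l)) :
    (completeBinaryTree l).degree i
      = if i.val = 0 then 2 else if i.val + 1 < 2 ^ l then 3 else 1 := by
  have hP := pow_ge hl
  have hN := Nn_eq l
  have hi := i.isLt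
  rw [degree_eq]
  rcases Nat.eq_zero_or_pos i.val with h0 | h0
  · rw [if_pos h0]
    have : ((Finset.range (Nn l)).filter
        (fun m => (i.val + 1) = (m + 1) / 2 ∨ (m + 1) = (i.val + 1) / 2)) = {1, 2} := by
      ext m
      simp only [mem_filter, mem_range, Finset.mem_insert, Finset.mem_singleton]
      omega
    rw [this]
    decide
  · rw [if_neg (by omega)]
    by_cases h2 : i.val + 1 < 2 ^ l
    · rw [if_pos h2]
      have : ((Finset.range (Nn l)).filter
          (fun m => (i.val + 1) = (m + 1) / 2 ∨ (m + 1) = (i.val + 1) / 2))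
          = {(i.val + 1) / 2 - 1, 2 * i.val + 1, 2 * i.val + 2} := by
        ext m
        simp only [mem_filter, mem_range, Finset.mem_insert, Finset.mem_singleton]
        omega
      rw [this, Finset.card_insert_of_notMem (by simp only [Finset.mem_insert, Finset.mem_singleton]; omega),
        Finset.card_insert_of_notMem (by simp only [Finset.mem_insert, Finset.mem_singleton]; omega), Finset.card_singleton]
    · rw [if_neg h2]
      have : ((Finset.range (Nn l)).filter
          (fun m => (i.val + 1) = (m + 1) / 2 ∨ (m + 1) = (i.val + 1) / 2))
          = {(i.val + 1) / 2 - 1} := by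
        ext m
        simp only [mem_filter, mem_range, Finset.mem_singleton]
        omega
      rw [this, Finset.card_singleton]

lemma Dv {l : ℕ} (hl : 3 ≤ l) (m : ℕ) (h1 : 1 ≤ m) (h2 : m ≤ Nn l) :
    (completeBinaryTree l).degree (vtx l m)
      = if m = 1 then 2 else if m < 2 ^ l then 3 else 1 := by
  rw [tree_degree hl, vtx_val m h1 h2]
  have : m - 1 + 1 = m := by omega
  rw [this]
  by_cases h : m = 1
  · simp [h]
  · rw [if_neg (by omega), if_neg h]

end CBT

namespace CBT

variable {l : ℕ}

lemma vtx_inj (m k : ℕ) (hm1 : 1 ≤ m) (hm2 : m ≤ Nn l) (hk1 : 1 ≤ k) (hk2 : k ≤ Nn l)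
    (h : vtx l m = vtx l k) : m = k := by
  have := congrArg Fin.val h
  rw [vtx_val m hm1 hm2, vtx_val k hk1 hk2] at this
  omega

lemma eps_coe (hl : 3 ≤ l) (m : ℕ) (h1 : 2 ≤ m) (h2 : m ≤ Nn l) :
    ((eps l hl m : (completeBinaryTree l).edgeSet) : Sym2 (Fin (Nn l)))
      = s(vtx l m, vtx l (m / 2)) := by
  rw [eps_eq hl m h1 h2]

lemma mem_eps (hl : 3 ≤ l) (m : ℕ) (h1 : 2 ≤ m) (h2 : m ≤ Nn l) (v : Fin (Nn l)) :
    v ∈ ((eps l hl m : (completeBinaryTree l).edgeSet) : Sym2 (Fin (Nn l)))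
      ↔ v = vtx l m ∨ v = vtx l (m / 2) := by
  rw [eps_coe hl m h1 h2, Sym2.mem_iff]

lemma eps_inj (hl : 3 ≤ l) (m k : ℕ) (hm1 : 2 ≤ m) (hm2 : m ≤ Nn l)
    (hk1 : 2 ≤ k) (hk2 : k ≤ Nn l) (h : eps l hl m = eps l hl k) : m = k := by
  have h' := congrArg (Subtype.val) h
  rw [eps_coe hl m hm1 hm2, eps_coe hl k hk1 hk2, Sym2.eq_iff] at h'
  rcases h' with ⟨ha, hb⟩ | ⟨ha, hb⟩
  · exact vtx_inj m k (by omega) hm2 (by omega) hk2 ha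
  · have h1 := vtx_inj m (k/2) (by omega) hm2 (by omega) (by omega) ha
    have h2 := vtx_inj (m/2) k (by omega) (by omega) (by omega) hk2 hb
    omega

lemma edge_repr (hl : 3 ≤ l) (e : (completeBinaryTree l).edgeSet) :
    ∃ m, 2 ≤ m ∧ m ≤ Nn l ∧ e = eps l hl m := by
  obtain ⟨e, he⟩ := e
  induction e using Sym2.ind with
  | _ x y =>
    rw [SimpleGraph.mem_edgeSet] at he
    have hx := x.isLt; have hy := y.isLt
    have hN := Nn_eq l; have hP := pow_ge hl
    rcases he with h | h
    · refine ⟨y.val + 1, by omega, by omega, ?_⟩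
      rw [eps_eq hl _ (by omega) (by omega)]
      apply Subtype.ext
      show s(x, y) = s(vtx l (y.val + 1), vtx l ((y.val + 1) / 2))
      have h1 : vtx l (y.val + 1) = y :=
        Fin.ext (by rw [vtx_val _ (by omega) (by omega)]; omega)
      have h2 : vtx l ((y.val + 1) / 2) = x :=
        Fin.ext (by rw [vtx_val _ (by omega) (by omega)]; omega)
      rw [h1, h2, Sym2.eq_swap]
    · refine ⟨x.val + 1, by omega, by omega, ?_⟩
      rw [eps_eq hl _ (by omega) (by omega)]
      apply Subtype.ext
      show s(x, y) = s(vtx l (x.val + 1), vtx l ((x.val + 1) / 2))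
      have h1 : vtx l (x.val + 1) = x :=
        Fin.ext (by rw [vtx_val _ (by omega) (by omega)]; omega)
      have h2 : vtx l ((x.val + 1) / 2) = y :=
        Fin.ext (by rw [vtx_val _ (by omega) (by omega)]; omega)
      rw [h1, h2]

end CBT


end DegreeLemmas

namespace CBT

open SimpleGraph

variable {l : ℕ}

def Ea (l : ℕ) : Finset (Sym2 (Fin (Nn l) ⊕ (completeBinaryTree l).edgeSet)) :=
  (Ico 2 (Nn l + 1)).image (fun m => s(Sum.inl (vtx l m), Sum.inl (vtx l (m / 2))))

def Eb1 (l : ℕ) (hl : 3 ≤ l) : Finset (Sym2 (Fin (Nn l) ⊕ (completeBinaryTree l).edgeSet)) :=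
  (Ico 2 (Nn l + 1)).image (fun m => s(Sum.inl (vtx l m), Sum.inr (eps l hl m)))

def Eb2 (l : ℕ) (hl : 3 ≤ l) : Finset (Sym2 (Fin (Nn l) ⊕ (completeBinaryTree l).edgeSet)) :=
  (Ico 2 (Nn l + 1)).image (fun m => s(Sum.inl (vtx l (m / 2)), Sum.inr (eps l hl m)))

def Ec1 (l : ℕ) (hl : 3 ≤ l) : Finset (Sym2 (Fin (Nn l) ⊕ (completeBinaryTree l).edgeSet)) :=
  (Ico 4 (Nn l + 1)).image (fun m => s(Sum.inr (eps l hl m), Sum.inr (eps l hl (m / 2))))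

def Ec2 (l : ℕ) (hl : 3 ≤ l) : Finset (Sym2 (Fin (Nn l) ⊕ (completeBinaryTree l).edgeSet)) :=
  (Ico 1 (2 ^ l)).image (fun j => s(Sum.inr (eps l hl (2 * j)), Sum.inr (eps l hl (2 * j + 1))))

lemma decomp (hl : 3 ≤ l) :
    (completeBinaryTree l).totalGraph.edgeFinset
      = Ea l ∪ Eb1 l hl ∪ Eb2 l hl ∪ Ec1 l hl ∪ Ec2 l hl := by
  have hN := Nn_eq l
  have hP := pow_ge hl
  apply Finset.Subset.antisymm
  · intro e
    induction e using Sym2.ind with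
    | _ x y =>
    intro he
    rw [SimpleGraph.mem_edgeFinset, SimpleGraph.mem_edgeSet] at he
    simp only [Ea, Eb1, Eb2, Ec1, Ec2, Finset.mem_union]
    rcases x with a | f <;> rcases y with b | g
    · have hadj : (completeBinaryTree l).Adj a b := he
      have ha := a.isLt; have hb := b.isLt
      rcases hadj with h | h
      · refine Or.inl (Or.inl (Or.inl (Or.inl ?_)))
        refine Finset.mem_image.mpr ⟨b.val + 1, Finset.mem_Ico.mpr ⟨by omega, by omega⟩, ?_⟩
        have h1 : vtx l (b.val + 1) = b :=
          Fin.ext (by rw [vtx_val _ (by omega) (by omega)]; omega)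
        have h2 : vtx l ((b.val + 1) / 2) = a :=
          Fin.ext (by rw [vtx_val _ (by omega) (by omega)]; omega)
        rw [h1, h2, Sym2.eq_swap]
      · refine Or.inl (Or.inl (Or.inl (Or.inl ?_)))
        refine Finset.mem_image.mpr ⟨a.val + 1, Finset.mem_Ico.mpr ⟨by omega, by omega⟩, ?_⟩
        have h1 : vtx l (a.val + 1) = a :=
          Fin.ext (by rw [vtx_val _ (by omega) (by omega)]; omega)
        have h2 : vtx l ((a.val + 1) / 2) = b :=
          Fin.ext (by rw [vtx_val _ (by omega) (by omega)]; omega)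
        rw [h1, h2]
    · obtain ⟨m, hm1, hm2, rfl⟩ := edge_repr hl g
      have hmem : a = vtx l m ∨ a = vtx l (m / 2) := (mem_eps hl m hm1 hm2 a).mp he
      rcases hmem with rfl | rfl
      · exact Or.inl (Or.inl (Or.inl (Or.inr
          (Finset.mem_image.mpr ⟨m, Finset.mem_Ico.mpr ⟨hm1, by omega⟩, rfl⟩))))
      · exact Or.inl (Or.inl (Or.inr
          (Finset.mem_image.mpr ⟨m, Finset.mem_Ico.mpr ⟨hm1, by omega⟩, rfl⟩)))
    · obtain ⟨m, hm1, hm2, rfl⟩ := edge_repr hl f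
      have hmem : b = vtx l m ∨ b = vtx l (m / 2) := (mem_eps hl m hm1 hm2 b).mp he
      rcases hmem with rfl | rfl
      · exact Or.inl (Or.inl (Or.inl (Or.inr
          (Finset.mem_image.mpr ⟨m, Finset.mem_Ico.mpr ⟨hm1, by omega⟩, Sym2.eq_swap⟩))))
      · exact Or.inl (Or.inl (Or.inr
          (Finset.mem_image.mpr ⟨m, Finset.mem_Ico.mpr ⟨hm1, by omega⟩, Sym2.eq_swap⟩)))
    · obtain ⟨m, hm1, hm2, rfl⟩ := edge_repr hl f
      obtain ⟨k, hk1, hk2, rfl⟩ := edge_repr hl g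
      obtain ⟨hne, w, hwf, hwg⟩ := he
      have hmk : m ≠ k := fun h => hne (by rw [h])
      rw [mem_eps hl m hm1 hm2 w] at hwf
      rw [mem_eps hl k hk1 hk2 w] at hwg
      have hrel : m = k / 2 ∨ k = m / 2 ∨ m / 2 = k / 2 := by
        rcases hwf with rfl | rfl <;> rcases hwg with h | h
        · exact absurd (vtx_inj m k (by omega) hm2 (by omega) hk2 h) hmk
        · exact Or.inl (vtx_inj m (k / 2) (by omega) hm2 (by omega) (by omega) h)
        · exact Or.inr (Or.inl (vtx_inj (m / 2) k (by omega) (by omega) (by omega) hk2 h).symm)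
        · exact Or.inr (Or.inr (vtx_inj (m / 2) (k / 2) (by omega) (by omega) (by omega)
            (by omega) h))
      rcases hrel with h | h | h
      · refine Or.inl (Or.inr ?_)
        refine Finset.mem_image.mpr ⟨k, Finset.mem_Ico.mpr ⟨by omega, by omega⟩, ?_⟩
        rw [← h]; exact Sym2.eq_swap
      · refine Or.inl (Or.inr ?_)
        refine Finset.mem_image.mpr ⟨m, Finset.mem_Ico.mpr ⟨by omega, by omega⟩, ?_⟩
        rw [← h]
      · by_cases hpar : m % 2 = 0
        · have hm' : 2 * (m / 2) = m := by omega
          have hk' : 2 * (m / 2) + 1 = k := by omega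
          refine Or.inr (Finset.mem_image.mpr ⟨m / 2, Finset.mem_Ico.mpr ⟨by omega, by omega⟩, ?_⟩)
          rw [hk', hm']
        · have hm' : 2 * (m / 2) = k := by omega
          have hk' : 2 * (m / 2) + 1 = m := by omega
          refine Or.inr (Finset.mem_image.mpr ⟨m / 2, Finset.mem_Ico.mpr ⟨by omega, by omega⟩, ?_⟩)
          rw [hk', hm']; exact Sym2.eq_swap
  · refine Finset.union_subset (Finset.union_subset (Finset.union_subset
      (Finset.union_subset ?_ ?_) ?_) ?_) ?_
    · refine Finset.image_subset_iff.mpr (fun m hm => ?_)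
      rw [Finset.mem_Ico] at hm
      rw [SimpleGraph.mem_edgeFinset, SimpleGraph.mem_edgeSet]
      exact hadj m hm.1 (by omega)
    · refine Finset.image_subset_iff.mpr (fun m hm => ?_)
      rw [Finset.mem_Ico] at hm
      rw [SimpleGraph.mem_edgeFinset, SimpleGraph.mem_edgeSet]
      exact (mem_eps hl m hm.1 (by omega) _).mpr (Or.inl rfl)
    · refine Finset.image_subset_iff.mpr (fun m hm => ?_)
      rw [Finset.mem_Ico] at hm
      rw [SimpleGraph.mem_edgeFinset, SimpleGraph.mem_edgeSet]
      exact (mem_eps hl m hm.1 (by omega) _).mpr (Or.inr rfl)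
    · refine Finset.image_subset_iff.mpr (fun m hm => ?_)
      rw [Finset.mem_Ico] at hm
      rw [SimpleGraph.mem_edgeFinset, SimpleGraph.mem_edgeSet]
      refine ⟨fun h => absurd (eps_inj hl m (m / 2) (by omega) (by omega) (by omega)
        (by omega) h) (by omega), ⟨vtx l (m / 2),
        (mem_eps hl m (by omega) (by omega) _).mpr (Or.inr rfl),
        (mem_eps hl (m / 2) (by omega) (by omega) _).mpr (Or.inl rfl)⟩⟩
    · refine Finset.image_subset_iff.mpr (fun j hj => ?_)
      rw [Finset.mem_Ico] at hj
      rw [SimpleGraph.mem_edgeFinset, SimpleGraph.mem_edgeSet]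
      have h1 : (2 * j) / 2 = (2 * j + 1) / 2 := by omega
      refine ⟨fun h => absurd (eps_inj hl (2 * j) (2 * j + 1) (by omega) (by omega) (by omega)
        (by omega) h) (by omega), ⟨vtx l ((2 * j) / 2),
        (mem_eps hl (2 * j) (by omega) (by omega) _).mpr (Or.inr rfl),
        (mem_eps hl (2 * j + 1) (by omega) (by omega) _).mpr (Or.inr (by rw [h1]))⟩⟩

end CBT


namespace CBT

open SimpleGraph

variable {l : ℕ}

lemma dj_Ea_Eb1 (hl : 3 ≤ l) : Disjoint (Ea l) (Eb1 l hl) := by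
  rw [Finset.disjoint_left]
  rintro e he1 he2
  simp only [Ea, Eb1, Finset.mem_image] at he1 he2
  obtain ⟨m, hm, rfl⟩ := he1
  obtain ⟨k, hk, h⟩ := he2
  rw [Sym2.eq_iff] at h
  rcases h with ⟨h1, h2⟩ | ⟨h1, h2⟩ <;>
    first | exact absurd h1 Sum.inl_ne_inr | exact absurd h1 Sum.inr_ne_inl | exact absurd h2 Sum.inr_ne_inl | exact absurd h2 Sum.inl_ne_inr

lemma dj_Ea_Eb2 (hl : 3 ≤ l) : Disjoint (Ea l) (Eb2 l hl) := by
  rw [Finset.disjoint_left]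
  rintro e he1 he2
  simp only [Ea, Eb2, Finset.mem_image] at he1 he2
  obtain ⟨m, hm, rfl⟩ := he1
  obtain ⟨k, hk, h⟩ := he2
  rw [Sym2.eq_iff] at h
  rcases h with ⟨h1, h2⟩ | ⟨h1, h2⟩ <;>
    first | exact absurd h1 Sum.inl_ne_inr | exact absurd h1 Sum.inr_ne_inl | exact absurd h2 Sum.inr_ne_inl | exact absurd h2 Sum.inl_ne_inr

lemma dj_Ea_Ec1 (hl : 3 ≤ l) : Disjoint (Ea l) (Ec1 l hl) := by
  rw [Finset.disjoint_left]
  rintro e he1 he2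
  simp only [Ea, Ec1, Finset.mem_image] at he1 he2
  obtain ⟨m, hm, rfl⟩ := he1
  obtain ⟨k, hk, h⟩ := he2
  rw [Sym2.eq_iff] at h
  rcases h with ⟨h1, h2⟩ | ⟨h1, h2⟩ <;>
    first | exact absurd h1 Sum.inl_ne_inr | exact absurd h1 Sum.inr_ne_inl | exact absurd h2 Sum.inr_ne_inl | exact absurd h2 Sum.inl_ne_inr

lemma dj_Ea_Ec2 (hl : 3 ≤ l) : Disjoint (Ea l) (Ec2 l hl) := by
  rw [Finset.disjoint_left]
  rintro e he1 he2
  simp only [Ea, Ec2, Finset.mem_image] at he1 he2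
  obtain ⟨m, hm, rfl⟩ := he1
  obtain ⟨k, hk, h⟩ := he2
  rw [Sym2.eq_iff] at h
  rcases h with ⟨h1, h2⟩ | ⟨h1, h2⟩ <;>
    first | exact absurd h1 Sum.inl_ne_inr | exact absurd h1 Sum.inr_ne_inl | exact absurd h2 Sum.inr_ne_inl | exact absurd h2 Sum.inl_ne_inr

lemma dj_Eb1_Ec1 (hl : 3 ≤ l) : Disjoint (Eb1 l hl) (Ec1 l hl) := by
  rw [Finset.disjoint_left]
  rintro e he1 he2
  simp only [Eb1, Ec1, Finset.mem_image] at he1 he2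
  obtain ⟨m, hm, rfl⟩ := he1
  obtain ⟨k, hk, h⟩ := he2
  rw [Sym2.eq_iff] at h
  rcases h with ⟨h1, h2⟩ | ⟨h1, h2⟩ <;>
    first | exact absurd h1 Sum.inl_ne_inr | exact absurd h1 Sum.inr_ne_inl | exact absurd h2 Sum.inr_ne_inl | exact absurd h2 Sum.inl_ne_inr

lemma dj_Eb1_Ec2 (hl : 3 ≤ l) : Disjoint (Eb1 l hl) (Ec2 l hl) := by
  rw [Finset.disjoint_left]
  rintro e he1 he2
  simp only [Eb1, Ec2, Finset.mem_image] at he1 he2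
  obtain ⟨m, hm, rfl⟩ := he1
  obtain ⟨k, hk, h⟩ := he2
  rw [Sym2.eq_iff] at h
  rcases h with ⟨h1, h2⟩ | ⟨h1, h2⟩ <;>
    first | exact absurd h1 Sum.inl_ne_inr | exact absurd h1 Sum.inr_ne_inl | exact absurd h2 Sum.inr_ne_inl | exact absurd h2 Sum.inl_ne_inr

lemma dj_Eb2_Ec1 (hl : 3 ≤ l) : Disjoint (Eb2 l hl) (Ec1 l hl) := by
  rw [Finset.disjoint_left]
  rintro e he1 he2
  simp only [Eb2, Ec1, Finset.mem_image] at he1 he2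
  obtain ⟨m, hm, rfl⟩ := he1
  obtain ⟨k, hk, h⟩ := he2
  rw [Sym2.eq_iff] at h
  rcases h with ⟨h1, h2⟩ | ⟨h1, h2⟩ <;>
    first | exact absurd h1 Sum.inl_ne_inr | exact absurd h1 Sum.inr_ne_inl | exact absurd h2 Sum.inr_ne_inl | exact absurd h2 Sum.inl_ne_inr

lemma dj_Eb2_Ec2 (hl : 3 ≤ l) : Disjoint (Eb2 l hl) (Ec2 l hl) := by
  rw [Finset.disjoint_left]
  rintro e he1 he2
  simp only [Eb2, Ec2, Finset.mem_image] at he1 he2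
  obtain ⟨m, hm, rfl⟩ := he1
  obtain ⟨k, hk, h⟩ := he2
  rw [Sym2.eq_iff] at h
  rcases h with ⟨h1, h2⟩ | ⟨h1, h2⟩ <;>
    first | exact absurd h1 Sum.inl_ne_inr | exact absurd h1 Sum.inr_ne_inl | exact absurd h2 Sum.inr_ne_inl | exact absurd h2 Sum.inl_ne_inr

lemma dj_Eb1_Eb2 (hl : 3 ≤ l) : Disjoint (Eb1 l hl) (Eb2 l hl) := by
  have hN := Nn_eq l
  have hP := pow_ge hl
  rw [Finset.disjoint_left]
  rintro e he1 he2
  simp only [Eb1, Eb2, Finset.mem_image] at he1 he2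
  obtain ⟨m, hm, rfl⟩ := he1
  obtain ⟨k, hk, h⟩ := he2
  rw [Finset.mem_Ico] at hm hk
  rw [Sym2.eq_iff] at h
  rcases h with ⟨h1, h2⟩ | ⟨h1, h2⟩
  · have hkm : k = m := eps_inj hl k m (by omega) (by omega) (by omega) (by omega)
      (Sum.inr.inj h2)
    subst hkm
    have := vtx_inj (k / 2) k (by omega) (by omega) (by omega) (by omega) (Sum.inl.inj h1)
    omega
  · exact nomatch h1

lemma dj_Ec1_Ec2 (hl : 3 ≤ l) : Disjoint (Ec1 l hl) (Ec2 l hl) := by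
  have hN := Nn_eq l
  have hP := pow_ge hl
  rw [Finset.disjoint_left]
  rintro e he1 he2
  simp only [Ec1, Ec2, Finset.mem_image] at he1 he2
  obtain ⟨m, hm, rfl⟩ := he1
  obtain ⟨j, hj, h⟩ := he2
  rw [Finset.mem_Ico] at hm hj
  rw [Sym2.eq_iff] at h
  rcases h with ⟨h1, h2⟩ | ⟨h1, h2⟩
  · have e1 : 2 * j = m := eps_inj hl (2 * j) m (by omega) (by omega) (by omega) (by omega)
      (Sum.inr.inj h1)
    have e2 : 2 * j + 1 = m / 2 := eps_inj hl (2 * j + 1) (m / 2) (by omega) (by omega)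
      (by omega) (by omega) (Sum.inr.inj h2)
    omega
  · have e1 : 2 * j = m / 2 := eps_inj hl (2 * j) (m / 2) (by omega) (by omega) (by omega)
      (by omega) (Sum.inr.inj h1)
    have e2 : 2 * j + 1 = m := eps_inj hl (2 * j + 1) m (by omega) (by omega) (by omega)
      (by omega) (Sum.inr.inj h2)
    omega

end CBT


namespace CBT

open SimpleGraph

variable {l : ℕ}

noncomputable def W (l : ℕ) : Sym2 (Fin (Nn l) ⊕ (completeBinaryTree l).edgeSet) → ℝ :=
  fun e => Sym2.lift ⟨fun u v =>
    2 / (((completeBinaryTree l).totalGraph.degree u : ℝ)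
      + ((completeBinaryTree l).totalGraph.degree v : ℝ)),
    fun u v => by simp [add_comm]⟩ e

lemma W_mk (x y : Fin (Nn l) ⊕ (completeBinaryTree l).edgeSet) :
    W l s(x, y) = 2 / (((completeBinaryTree l).totalGraph.degree x : ℝ)
      + ((completeBinaryTree l).totalGraph.degree y : ℝ)) := by
  simp only [W, Sym2.lift_mk]

lemma harmonic_eq :
    (completeBinaryTree l).totalGraph.harmonicIndex
      = ∑ e ∈ (completeBinaryTree l).totalGraph.edgeFinset, W l e := rfl

lemma Dval1 (hl : 3 ≤ l) : (completeBinaryTree l).degree (vtx l 1) = 2 := by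
  have hN := Nn_eq l; have hP := pow_ge hl
  rw [Dv hl 1 le_rfl (by omega)]; simp

lemma Dval3 (hl : 3 ≤ l) (m : ℕ) (h1 : 2 ≤ m) (h2 : m < 2 ^ l) :
    (completeBinaryTree l).degree (vtx l m) = 3 := by
  have hN := Nn_eq l; have hP := pow_ge hl
  rw [Dv hl m (by omega) (by omega), if_neg (by omega), if_pos h2]

lemma Dleaf (hl : 3 ≤ l) (m : ℕ) (h1 : 2 ^ l ≤ m) (h2 : m ≤ Nn l) :
    (completeBinaryTree l).degree (vtx l m) = 1 := by
  have hN := Nn_eq l; have hP := pow_ge hl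
  rw [Dv hl m (by omega) h2, if_neg (by omega), if_neg (by omega)]

lemma degV (m : ℕ) :
    (completeBinaryTree l).totalGraph.degree (Sum.inl (vtx l m))
      = 2 * (completeBinaryTree l).degree (vtx l m) :=
  SimpleGraph.totalGraph_degree_inl _ _

lemma degE (hl : 3 ≤ l) (m : ℕ) (h1 : 2 ≤ m) (h2 : m ≤ Nn l) :
    (completeBinaryTree l).totalGraph.degree (Sum.inr (eps l hl m))
      = (completeBinaryTree l).degree (vtx l m)
        + (completeBinaryTree l).degree (vtx l (m / 2)) := by
  rw [eps_eq hl m h1 h2]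
  exact SimpleGraph.totalGraph_degree_inr _ _ _ (hadj m h1 h2)

lemma sum_const_Ico (a b : ℕ) (f : ℕ → ℝ) (c : ℝ) (h : ∀ m, a ≤ m → m < b → f m = c) :
    ∑ m ∈ Finset.Ico a b, f m = (b - a : ℕ) * c := by
  rw [Finset.sum_congr rfl (fun m hm => h m (Finset.mem_Ico.mp hm).1 (Finset.mem_Ico.mp hm).2),
    Finset.sum_const, Nat.card_Ico, nsmul_eq_mul]

end CBT


/-- For the complete binary tree `T_l` of level `l ≥ 3`,
`H(T(T_l)) = (223/120)·2^l - 758/495`. -/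
theorem harmonicIndex_totalGraph_completeBinaryTree (l : ℕ) (hl : 3 ≤ l) :
    (completeBinaryTree l).totalGraph.harmonicIndex
      = (223 / 120) * 2 ^ l - 758 / 495 := by
  have hN := CBT.Nn_eq l
  have hP := CBT.pow_ge hl
  have hQ : 2 ^ l = 2 * 2 ^ (l - 1) := by
    rw [← pow_succ']
    congr 1
    omega
  have hQ4 : 4 ≤ 2 ^ (l - 1) := by
    calc (4:ℕ) = 2 ^ 2 := rfl
    _ ≤ 2 ^ (l - 1) := Nat.pow_le_pow_right (by norm_num) (by omega)
  -- injectivity of the five parametrizations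
  have injA : ∀ x ∈ Finset.Ico 2 (CBT.Nn l + 1), ∀ y ∈ Finset.Ico 2 (CBT.Nn l + 1),
      s(Sum.inl (CBT.vtx l x), Sum.inl (CBT.vtx l (x / 2)))
        = (s(Sum.inl (CBT.vtx l y), Sum.inl (CBT.vtx l (y / 2)))
          : Sym2 (Fin (CBT.Nn l) ⊕ (completeBinaryTree l).edgeSet)) → x = y := by
    intro m hm k hk h
    rw [Finset.mem_Ico] at hm hk
    rw [Sym2.eq_iff] at h
    rcases h with ⟨h1, h2⟩ | ⟨h1, h2⟩
    · exact CBT.vtx_inj m k (by omega) (by omega) (by omega) (by omega) (Sum.inl.inj h1)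
    · have e1 := CBT.vtx_inj m (k / 2) (by omega) (by omega) (by omega) (by omega)
        (Sum.inl.inj h1)
      have e2 := CBT.vtx_inj (m / 2) k (by omega) (by omega) (by omega) (by omega)
        (Sum.inl.inj h2)
      omega
  have injB1 : ∀ x ∈ Finset.Ico 2 (CBT.Nn l + 1), ∀ y ∈ Finset.Ico 2 (CBT.Nn l + 1),
      s(Sum.inl (CBT.vtx l x), Sum.inr (CBT.eps l hl x))
        = s(Sum.inl (CBT.vtx l y), Sum.inr (CBT.eps l hl y)) → x = y := by
    intro m hm k hk h
    rw [Finset.mem_Ico] at hm hk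
    rw [Sym2.eq_iff] at h
    rcases h with ⟨h1, h2⟩ | ⟨h1, h2⟩
    · exact CBT.eps_inj hl m k (by omega) (by omega) (by omega) (by omega) (Sum.inr.inj h2)
    · exact nomatch h1
  have injB2 : ∀ x ∈ Finset.Ico 2 (CBT.Nn l + 1), ∀ y ∈ Finset.Ico 2 (CBT.Nn l + 1),
      s(Sum.inl (CBT.vtx l (x / 2)), Sum.inr (CBT.eps l hl x))
        = s(Sum.inl (CBT.vtx l (y / 2)), Sum.inr (CBT.eps l hl y)) → x = y := by
    intro m hm k hk h
    rw [Finset.mem_Ico] at hm hk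
    rw [Sym2.eq_iff] at h
    rcases h with ⟨h1, h2⟩ | ⟨h1, h2⟩
    · exact CBT.eps_inj hl m k (by omega) (by omega) (by omega) (by omega) (Sum.inr.inj h2)
    · exact nomatch h1
  have injC1 : ∀ x ∈ Finset.Ico 4 (CBT.Nn l + 1), ∀ y ∈ Finset.Ico 4 (CBT.Nn l + 1),
      s(Sum.inr (CBT.eps l hl x), Sum.inr (CBT.eps l hl (x / 2)))
        = (s(Sum.inr (CBT.eps l hl y), Sum.inr (CBT.eps l hl (y / 2)))
          : Sym2 (Fin (CBT.Nn l) ⊕ (completeBinaryTree l).edgeSet)) → x = y := by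
    intro m hm k hk h
    rw [Finset.mem_Ico] at hm hk
    rw [Sym2.eq_iff] at h
    rcases h with ⟨h1, h2⟩ | ⟨h1, h2⟩
    · exact CBT.eps_inj hl m k (by omega) (by omega) (by omega) (by omega) (Sum.inr.inj h1)
    · have e1 := CBT.eps_inj hl m (k / 2) (by omega) (by omega) (by omega) (by omega)
        (Sum.inr.inj h1)
      have e2 := CBT.eps_inj hl (m / 2) k (by omega) (by omega) (by omega) (by omega)
        (Sum.inr.inj h2)
      omega
  have injC2 : ∀ x ∈ Finset.Ico 1 (2 ^ l), ∀ y ∈ Finset.Ico 1 (2 ^ l),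
      s(Sum.inr (CBT.eps l hl (2 * x)), Sum.inr (CBT.eps l hl (2 * x + 1)))
        = (s(Sum.inr (CBT.eps l hl (2 * y)), Sum.inr (CBT.eps l hl (2 * y + 1)))
          : Sym2 (Fin (CBT.Nn l) ⊕ (completeBinaryTree l).edgeSet)) → x = y := by
    intro m hm k hk h
    rw [Finset.mem_Ico] at hm hk
    rw [Sym2.eq_iff] at h
    rcases h with ⟨h1, h2⟩ | ⟨h1, h2⟩
    · have e1 := CBT.eps_inj hl (2 * m) (2 * k) (by omega) (by omega) (by omega) (by omega)
        (Sum.inr.inj h1)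
      omega
    · have e1 := CBT.eps_inj hl (2 * m) (2 * k + 1) (by omega) (by omega) (by omega) (by omega)
        (Sum.inr.inj h1)
      omega
  -- pointwise values
  have evA1 : ∀ m, 2 ≤ m → m < 4 →
      CBT.W l s(Sum.inl (CBT.vtx l m), Sum.inl (CBT.vtx l (m / 2))) = 1 / 5 := by
    intro m h1 h2
    have e2 : m / 2 = 1 := by omega
    rw [CBT.W_mk, CBT.degV, CBT.degV, e2, CBT.Dval3 hl m (by omega) (by omega), CBT.Dval1 hl]
    norm_num
  have evA2 : ∀ m, 4 ≤ m → m < 2 ^ l →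
      CBT.W l s(Sum.inl (CBT.vtx l m), Sum.inl (CBT.vtx l (m / 2))) = 1 / 6 := by
    intro m h1 h2
    rw [CBT.W_mk, CBT.degV, CBT.degV, CBT.Dval3 hl m (by omega) (by omega),
      CBT.Dval3 hl (m / 2) (by omega) (by omega)]
    norm_num
  have evA3 : ∀ m, 2 ^ l ≤ m → m < CBT.Nn l + 1 →
      CBT.W l s(Sum.inl (CBT.vtx l m), Sum.inl (CBT.vtx l (m / 2))) = 1 / 4 := by
    intro m h1 h2
    rw [CBT.W_mk, CBT.degV, CBT.degV, CBT.Dleaf hl m (by omega) (by omega),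
      CBT.Dval3 hl (m / 2) (by omega) (by omega)]
    norm_num
  have evB1a : ∀ m, 2 ≤ m → m < 4 →
      CBT.W l s(Sum.inl (CBT.vtx l m), Sum.inr (CBT.eps l hl m)) = 2 / 11 := by
    intro m h1 h2
    have e2 : m / 2 = 1 := by omega
    rw [CBT.W_mk, CBT.degV, CBT.degE hl m (by omega) (by omega), e2,
      CBT.Dval3 hl m (by omega) (by omega), CBT.Dval1 hl]
    norm_num
  have evB1b : ∀ m, 4 ≤ m → m < 2 ^ l →
      CBT.W l s(Sum.inl (CBT.vtx l m), Sum.inr (CBT.eps l hl m)) = 1 / 6 := by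
    intro m h1 h2
    rw [CBT.W_mk, CBT.degV, CBT.degE hl m (by omega) (by omega),
      CBT.Dval3 hl m (by omega) (by omega), CBT.Dval3 hl (m / 2) (by omega) (by omega)]
    norm_num
  have evB1c : ∀ m, 2 ^ l ≤ m → m < CBT.Nn l + 1 →
      CBT.W l s(Sum.inl (CBT.vtx l m), Sum.inr (CBT.eps l hl m)) = 1 / 3 := by
    intro m h1 h2
    rw [CBT.W_mk, CBT.degV, CBT.degE hl m (by omega) (by omega),
      CBT.Dleaf hl m (by omega) (by omega), CBT.Dval3 hl (m / 2) (by omega) (by omega)]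
    norm_num
  have evB2a : ∀ m, 2 ≤ m → m < 4 →
      CBT.W l s(Sum.inl (CBT.vtx l (m / 2)), Sum.inr (CBT.eps l hl m)) = 2 / 9 := by
    intro m h1 h2
    have e2 : m / 2 = 1 := by omega
    rw [CBT.W_mk, CBT.degV, CBT.degE hl m (by omega) (by omega), e2,
      CBT.Dval3 hl m (by omega) (by omega), CBT.Dval1 hl]
    norm_num
  have evB2b : ∀ m, 4 ≤ m → m < 2 ^ l →
      CBT.W l s(Sum.inl (CBT.vtx l (m / 2)), Sum.inr (CBT.eps l hl m)) = 1 / 6 := by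
    intro m h1 h2
    rw [CBT.W_mk, CBT.degV, CBT.degE hl m (by omega) (by omega),
      CBT.Dval3 hl m (by omega) (by omega), CBT.Dval3 hl (m / 2) (by omega) (by omega)]
    norm_num
  have evB2c : ∀ m, 2 ^ l ≤ m → m < CBT.Nn l + 1 →
      CBT.W l s(Sum.inl (CBT.vtx l (m / 2)), Sum.inr (CBT.eps l hl m)) = 1 / 5 := by
    intro m h1 h2
    rw [CBT.W_mk, CBT.degV, CBT.degE hl m (by omega) (by omega),
      CBT.Dleaf hl m (by omega) (by omega), CBT.Dval3 hl (m / 2) (by omega) (by omega)]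
    norm_num
  have evC1a : ∀ m, 4 ≤ m → m < 8 →
      CBT.W l s(Sum.inr (CBT.eps l hl m), Sum.inr (CBT.eps l hl (m / 2))) = 2 / 11 := by
    intro m h1 h2
    have e4 : m / 2 / 2 = 1 := by omega
    rw [CBT.W_mk, CBT.degE hl m (by omega) (by omega),
      CBT.degE hl (m / 2) (by omega) (by omega), e4,
      CBT.Dval3 hl m (by omega) (by omega), CBT.Dval3 hl (m / 2) (by omega) (by omega),
      CBT.Dval1 hl]
    norm_num
  have evC1b : ∀ m, 8 ≤ m → m < 2 ^ l →
      CBT.W l s(Sum.inr (CBT.eps l hl m), Sum.inr (CBT.eps l hl (m / 2))) = 1 / 6 := by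
    intro m h1 h2
    rw [CBT.W_mk, CBT.degE hl m (by omega) (by omega),
      CBT.degE hl (m / 2) (by omega) (by omega),
      CBT.Dval3 hl m (by omega) (by omega), CBT.Dval3 hl (m / 2) (by omega) (by omega),
      CBT.Dval3 hl (m / 2 / 2) (by omega) (by omega)]
    norm_num
  have evC1c : ∀ m, 2 ^ l ≤ m → m < CBT.Nn l + 1 →
      CBT.W l s(Sum.inr (CBT.eps l hl m), Sum.inr (CBT.eps l hl (m / 2))) = 1 / 5 := by
    intro m h1 h2
    rw [CBT.W_mk, CBT.degE hl m (by omega) (by omega),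
      CBT.degE hl (m / 2) (by omega) (by omega),
      CBT.Dleaf hl m (by omega) (by omega), CBT.Dval3 hl (m / 2) (by omega) (by omega),
      CBT.Dval3 hl (m / 2 / 2) (by omega) (by omega)]
    norm_num
  have evC2a : ∀ j, 1 ≤ j → j < 2 →
      CBT.W l s(Sum.inr (CBT.eps l hl (2 * j)), Sum.inr (CBT.eps l hl (2 * j + 1))) = 1 / 5 := by
    intro j h1 h2
    have hj : j = 1 := by omega
    subst hj
    rw [show (2 * 1 + 1 : ℕ) = 3 from rfl, show (2 * 1 : ℕ) = 2 from rfl, CBT.W_mk,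
      CBT.degE hl 2 (by omega) (by omega), CBT.degE hl 3 (by omega) (by omega),
      CBT.Dval3 hl 2 (by omega) (by omega), CBT.Dval3 hl 3 (by omega) (by omega), CBT.Dval1 hl]
    norm_num
  have evC2b : ∀ j, 2 ≤ j → j < 2 ^ (l - 1) →
      CBT.W l s(Sum.inr (CBT.eps l hl (2 * j)), Sum.inr (CBT.eps l hl (2 * j + 1))) = 1 / 6 := by
    intro j h1 h2
    have h2j : 2 * j / 2 = j := by omega
    have h2j1 : (2 * j + 1) / 2 = j := by omega
    rw [CBT.W_mk, CBT.degE hl (2 * j) (by omega) (by omega),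
      CBT.degE hl (2 * j + 1) (by omega) (by omega), h2j, h2j1,
      CBT.Dval3 hl (2 * j) (by omega) (by omega), CBT.Dval3 hl (2 * j + 1) (by omega) (by omega),
      CBT.Dval3 hl j (by omega) (by omega)]
    norm_num
  have evC2c : ∀ j, 2 ^ (l - 1) ≤ j → j < 2 ^ l →
      CBT.W l s(Sum.inr (CBT.eps l hl (2 * j)), Sum.inr (CBT.eps l hl (2 * j + 1))) = 1 / 4 := by
    intro j h1 h2
    have h2j : 2 * j / 2 = j := by omega
    have h2j1 : (2 * j + 1) / 2 = j := by omega
    rw [CBT.W_mk, CBT.degE hl (2 * j) (by omega) (by omega),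
      CBT.degE hl (2 * j + 1) (by omega) (by omega), h2j, h2j1,
      CBT.Dleaf hl (2 * j) (by omega) (by omega), CBT.Dleaf hl (2 * j + 1) (by omega) (by omega),
      CBT.Dval3 hl j (by omega) (by omega)]
    norm_num
  -- the five family sums
  have sA : ∑ m ∈ Finset.Ico 2 (CBT.Nn l + 1),
      CBT.W l s(Sum.inl (CBT.vtx l m), Sum.inl (CBT.vtx l (m / 2)))
      = ((2 : ℕ) : ℝ) * (1 / 5) + ((2 ^ l - 4 : ℕ) : ℝ) * (1 / 6)
        + ((2 ^ l : ℕ) : ℝ) * (1 / 4) := by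
    rw [← Finset.sum_Ico_consecutive _ (show 2 ≤ 2 ^ l by omega)
        (show 2 ^ l ≤ CBT.Nn l + 1 by omega),
      ← Finset.sum_Ico_consecutive _ (show (2:ℕ) ≤ 4 by omega) (show (4:ℕ) ≤ 2 ^ l by omega),
      CBT.sum_const_Ico 2 4 _ (1 / 5) evA1, CBT.sum_const_Ico 4 (2 ^ l) _ (1 / 6) evA2,
      CBT.sum_const_Ico (2 ^ l) (CBT.Nn l + 1) _ (1 / 4) evA3,
      show (4 : ℕ) - 2 = 2 from rfl, show CBT.Nn l + 1 - 2 ^ l = 2 ^ l by omega]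
  have sB1 : ∑ m ∈ Finset.Ico 2 (CBT.Nn l + 1),
      CBT.W l s(Sum.inl (CBT.vtx l m), Sum.inr (CBT.eps l hl m))
      = ((2 : ℕ) : ℝ) * (2 / 11) + ((2 ^ l - 4 : ℕ) : ℝ) * (1 / 6)
        + ((2 ^ l : ℕ) : ℝ) * (1 / 3) := by
    rw [← Finset.sum_Ico_consecutive _ (show 2 ≤ 2 ^ l by omega)
        (show 2 ^ l ≤ CBT.Nn l + 1 by omega),
      ← Finset.sum_Ico_consecutive _ (show (2:ℕ) ≤ 4 by omega) (show (4:ℕ) ≤ 2 ^ l by omega),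
      CBT.sum_const_Ico 2 4 _ (2 / 11) evB1a, CBT.sum_const_Ico 4 (2 ^ l) _ (1 / 6) evB1b,
      CBT.sum_const_Ico (2 ^ l) (CBT.Nn l + 1) _ (1 / 3) evB1c,
      show (4 : ℕ) - 2 = 2 from rfl, show CBT.Nn l + 1 - 2 ^ l = 2 ^ l by omega]
  have sB2 : ∑ m ∈ Finset.Ico 2 (CBT.Nn l + 1),
      CBT.W l s(Sum.inl (CBT.vtx l (m / 2)), Sum.inr (CBT.eps l hl m))
      = ((2 : ℕ) : ℝ) * (2 / 9) + ((2 ^ l - 4 : ℕ) : ℝ) * (1 / 6)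
        + ((2 ^ l : ℕ) : ℝ) * (1 / 5) := by
    rw [← Finset.sum_Ico_consecutive _ (show 2 ≤ 2 ^ l by omega)
        (show 2 ^ l ≤ CBT.Nn l + 1 by omega),
      ← Finset.sum_Ico_consecutive _ (show (2:ℕ) ≤ 4 by omega) (show (4:ℕ) ≤ 2 ^ l by omega),
      CBT.sum_const_Ico 2 4 _ (2 / 9) evB2a, CBT.sum_const_Ico 4 (2 ^ l) _ (1 / 6) evB2b,
      CBT.sum_const_Ico (2 ^ l) (CBT.Nn l + 1) _ (1 / 5) evB2c,
      show (4 : ℕ) - 2 = 2 from rfl, show CBT.Nn l + 1 - 2 ^ l = 2 ^ l by omega]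
  have sC1 : ∑ m ∈ Finset.Ico 4 (CBT.Nn l + 1),
      CBT.W l s(Sum.inr (CBT.eps l hl m), Sum.inr (CBT.eps l hl (m / 2)))
      = ((4 : ℕ) : ℝ) * (2 / 11) + ((2 ^ l - 8 : ℕ) : ℝ) * (1 / 6)
        + ((2 ^ l : ℕ) : ℝ) * (1 / 5) := by
    rw [← Finset.sum_Ico_consecutive _ (show 4 ≤ 2 ^ l by omega)
        (show 2 ^ l ≤ CBT.Nn l + 1 by omega),
      ← Finset.sum_Ico_consecutive _ (show (4:ℕ) ≤ 8 by omega) (show (8:ℕ) ≤ 2 ^ l by omega),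
      CBT.sum_const_Ico 4 8 _ (2 / 11) evC1a, CBT.sum_const_Ico 8 (2 ^ l) _ (1 / 6) evC1b,
      CBT.sum_const_Ico (2 ^ l) (CBT.Nn l + 1) _ (1 / 5) evC1c,
      show (8 : ℕ) - 4 = 4 from rfl, show CBT.Nn l + 1 - 2 ^ l = 2 ^ l by omega]
  have sC2 : ∑ j ∈ Finset.Ico 1 (2 ^ l),
      CBT.W l s(Sum.inr (CBT.eps l hl (2 * j)), Sum.inr (CBT.eps l hl (2 * j + 1)))
      = ((1 : ℕ) : ℝ) * (1 / 5) + ((2 ^ (l - 1) - 2 : ℕ) : ℝ) * (1 / 6)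
        + ((2 ^ (l - 1) : ℕ) : ℝ) * (1 / 4) := by
    rw [← Finset.sum_Ico_consecutive _ (show 1 ≤ 2 ^ (l - 1) by omega)
        (show 2 ^ (l - 1) ≤ 2 ^ l by omega),
      ← Finset.sum_Ico_consecutive _ (show (1:ℕ) ≤ 2 by omega)
        (show (2:ℕ) ≤ 2 ^ (l - 1) by omega),
      CBT.sum_const_Ico 1 2 _ (1 / 5) evC2a, CBT.sum_const_Ico 2 (2 ^ (l - 1)) _ (1 / 6) evC2b,
      CBT.sum_const_Ico (2 ^ (l - 1)) (2 ^ l) _ (1 / 4) evC2c,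
      show (2 : ℕ) - 1 = 1 from rfl, show 2 ^ l - 2 ^ (l - 1) = 2 ^ (l - 1) by omega]
  rw [CBT.harmonic_eq, CBT.decomp hl,
    Finset.sum_union (Finset.disjoint_union_left.mpr ⟨Finset.disjoint_union_left.mpr
      ⟨Finset.disjoint_union_left.mpr ⟨CBT.dj_Ea_Ec2 hl, CBT.dj_Eb1_Ec2 hl⟩,
        CBT.dj_Eb2_Ec2 hl⟩, CBT.dj_Ec1_Ec2 hl⟩),
    Finset.sum_union (Finset.disjoint_union_left.mpr ⟨Finset.disjoint_union_left.mpr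
      ⟨CBT.dj_Ea_Ec1 hl, CBT.dj_Eb1_Ec1 hl⟩, CBT.dj_Eb2_Ec1 hl⟩),
    Finset.sum_union (Finset.disjoint_union_left.mpr ⟨CBT.dj_Ea_Eb2 hl, CBT.dj_Eb1_Eb2 hl⟩),
    Finset.sum_union (CBT.dj_Ea_Eb1 hl)]
  simp only [CBT.Ea, CBT.Eb1, CBT.Eb2, CBT.Ec1, CBT.Ec2]
  rw [Finset.sum_image injA, Finset.sum_image injB1, Finset.sum_image injB2,
    Finset.sum_image injC1, Finset.sum_image injC2]
  rw [sA, sB1, sB2, sC1, sC2]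
  rw [Nat.cast_sub (show (4:ℕ) ≤ 2 ^ l by omega), Nat.cast_sub (show (8:ℕ) ≤ 2 ^ l by omega),
    Nat.cast_sub (show (2:ℕ) ≤ 2 ^ (l - 1) by omega)]
  push_cast
  rw [show ((2:ℝ) ^ l) = 2 * 2 ^ (l - 1) from by rw [← pow_succ']; congr 1; omega]
  ring
end
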